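/- arXiv:1104.3487 — 7 statements merged into one kernel-verified Lean document; each statement's English description precedes it below -/
import Mathlib

section
/- Assume ζ_3 ≠ ζ_4. Then the tetrahedron weight factorizes as a product of two linear forms: (1/ζ_{34}) · (ζ_{23} a_{123} − ζ_{24} a_{124} + ζ_{34} a_{134}) · (ζ_{13} a_{123} − ζ_{14} a_{124} + ζ_{34} a_{234}) = f_{1234}. -/
/-!  Context: a Grassmann algebra `Λ` over a field `F` of characteristic ≠ 2, with
anticommuting generators indexed by a type `ι` (for us: the (3-element) subsets
`S ⊆ Fin 5`, possibly together with extra generators `b`).  Vertex `k ∈ {1,…,5}`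
of the paper corresponds to `k - 1 : Fin 5`, so `ζ_{ij} = ζ (i-1) - ζ (j-1)`.
The Berezin integral in a generator is axiomatized by the predicate `IsBerezin`. -/

/-- The subalgebra of elements not involving the generator `e i`, i.e. the
subalgebra generated by all the other generators. -/
def notInvolving (F : Type*) [Field F] {Λ : Type*} [Ring Λ] [Algebra F Λ]
    {ι : Type*} (e : ι → Λ) (i : ι) : Subalgebra F Λ :=
  Algebra.adjoin F { x | ∃ j, j ≠ i ∧ x = e j }

/-- `B` is the Berezin integral with respect to the generator `e i`: it is `F`-linear
and, writing `x = g + h * e i` with `g`, `h` not involving `e i` (the generator moved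
to the rightmost position), one has `B x = h`.  Equivalently: `B g = 0` and
`B (h * e i) = h` for `g`, `h` not involving `e i`. -/
def IsBerezin (F : Type*) [Field F] {Λ : Type*} [Ring Λ] [Algebra F Λ]
    {ι : Type*} (e : ι → Λ) (i : ι) (B : Λ →ₗ[F] Λ) : Prop :=
  (∀ g ∈ notInvolving F e i, B g = 0) ∧
  (∀ h ∈ notInvolving F e i, B (h * e i) = h)

/-- The tetrahedron weight `f_{i₁i₂i₃i₄}` (formula (1) of the paper), where
`a S` is the Grassmann generator attached to the unoriented 2-face `S`. -/
def fw {F : Type*} [Field F] {Λ : Type*} [Ring Λ] [Algebra F Λ]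
    (ζ : Fin 5 → F) (a : Finset (Fin 5) → Λ) (i₁ i₂ i₃ i₄ : Fin 5) : Λ :=
  (ζ i₁ - ζ i₂) • (a {i₁, i₂, i₃} * a {i₁, i₂, i₄})
    - (ζ i₁ - ζ i₃) • (a {i₁, i₂, i₃} * a {i₁, i₃, i₄})
    + (ζ i₁ - ζ i₄) • (a {i₁, i₂, i₄} * a {i₁, i₃, i₄})
    + (ζ i₂ - ζ i₃) • (a {i₁, i₂, i₃} * a {i₂, i₃, i₄})
    - (ζ i₂ - ζ i₄) • (a {i₁, i₂, i₄} * a {i₂, i₃, i₄})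
    + (ζ i₃ - ζ i₄) • (a {i₁, i₃, i₄} * a {i₂, i₃, i₄})

/-- The tetrahedron weight factorizes as a product of two linear forms:
`f₁₂₃₄ = (1/ζ₃₄)(ζ₂₃ a₁₂₃ − ζ₂₄ a₁₂₄ + ζ₃₄ a₁₃₄)(ζ₁₃ a₁₂₃ − ζ₁₄ a₁₂₄ + ζ₃₄ a₂₃₄)`. -/
theorem fw_factorization
    {F : Type*} [Field F] {Λ : Type*} [Ring Λ] [Algebra F Λ]
    (hchar : (2 : F) ≠ 0)
    (ζ : Fin 5 → F)
    (h34 : ζ 2 ≠ ζ 3)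
    (a : Finset (Fin 5) → Λ)
    (hanti : ∀ S T, a S * a T = -(a T * a S))
    (hsq : ∀ S, a S * a S = 0)
 :
    (ζ 2 - ζ 3)⁻¹ •
        (((ζ 1 - ζ 2) • a {0, 1, 2} - (ζ 1 - ζ 3) • a {0, 1, 3} + (ζ 2 - ζ 3) • a {0, 2, 3}) *
          ((ζ 0 - ζ 2) • a {0, 1, 2} - (ζ 0 - ζ 3) • a {0, 1, 3} + (ζ 2 - ζ 3) • a {1, 2, 3})) =
      fw ζ a 0 1 2 3 := by
  have hr : ζ 2 - ζ 3 ≠ 0 := sub_ne_zero.mpr h34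
  rw [inv_smul_eq_iff₀ hr]
  have h1 := hanti ({0,1,3} : Finset (Fin 5)) {0,1,2}
  have h2 := hanti ({0,2,3} : Finset (Fin 5)) {0,1,2}
  have h3 := hanti ({0,2,3} : Finset (Fin 5)) {0,1,3}
  have h4 := hanti ({1,2,3} : Finset (Fin 5)) {0,1,2}
  have h5 := hanti ({1,2,3} : Finset (Fin 5)) {0,1,3}
  have h6 := hanti ({1,2,3} : Finset (Fin 5)) {0,2,3}
  simp only [fw, add_mul, sub_mul, mul_add, mul_sub, smul_mul_assoc, mul_smul_comm,
    hsq, h1, h2, h3, h4, h5, h6, smul_neg, smul_zero, smul_smul]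
  module
end

section
/- Assume ζ_3 ≠ ζ_4. Then the Gaussian integral representation ∬ exp(Φ_{1234}) db^{(1)} db^{(2)} = f_{1234} holds (integration over b^{(1)} first, then b^{(2)}). -/
/-- The (terminating) Taylor series of the exponential of a nilpotent element:
`exp x = Σ_{n < N} xⁿ/n!`, where `N` is any bound with `x ^ N = 0`. -/
def expT (F : Type*) [Field F] {Λ : Type*} [Ring Λ] [Algebra F Λ] (N : ℕ) (x : Λ) : Λ :=
  ∑ n ∈ Finset.range N, ((n.factorial : F))⁻¹ • x ^ n

/-- The bilinear form `Φ_{i₁i₂i₃i₄}` (formula (6) of the paper):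
`Φ = b⁽¹⁾(ζ_{i₂i₃} a_{i₁i₂i₃} − ζ_{i₂i₄} a_{i₁i₂i₄} + ζ_{i₃i₄} a_{i₁i₃i₄})
   + b⁽²⁾((ζ_{i₁i₃}/ζ_{i₃i₄}) a_{i₁i₂i₃} − (ζ_{i₁i₄}/ζ_{i₃i₄}) a_{i₁i₂i₄} + a_{i₂i₃i₄})`,
where `e (Sum.inl S) = a_S` and `e (Sum.inr b₁)`, `e (Sum.inr b₂)` are the two
extra generators `b⁽¹⁾`, `b⁽²⁾` attached to the tetrahedron. -/
def PhiT {F : Type*} [Field F] {Λ : Type*} [Ring Λ] [Algebra F Λ] {β : Type*}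
    (ζ : Fin 5 → F) (e : Finset (Fin 5) ⊕ β → Λ) (b₁ b₂ : β) (i₁ i₂ i₃ i₄ : Fin 5) : Λ :=
  e (Sum.inr b₁) *
      ((ζ i₂ - ζ i₃) • e (Sum.inl {i₁, i₂, i₃}) - (ζ i₂ - ζ i₄) • e (Sum.inl {i₁, i₂, i₄})
        + (ζ i₃ - ζ i₄) • e (Sum.inl {i₁, i₃, i₄}))
    + e (Sum.inr b₂) *
      (((ζ i₁ - ζ i₃) / (ζ i₃ - ζ i₄)) • e (Sum.inl {i₁, i₂, i₃})
        - ((ζ i₁ - ζ i₄) / (ζ i₃ - ζ i₄)) • e (Sum.inl {i₁, i₂, i₄})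
        + e (Sum.inl {i₂, i₃, i₄}))

lemma span_anticomm {F : Type*} [Field F] {Λ : Type*} [Ring Λ] [Algebra F Λ]
    {ι : Type*} (e : ι → Λ) (hanti : ∀ i j, e i * e j = -(e j * e i))
    {x y : Λ} (hx : x ∈ Submodule.span F (Set.range e))
    (hy : y ∈ Submodule.span F (Set.range e)) : x * y = -(y * x) := by
  induction hx, hy using Submodule.span_induction₂ with
  | mem_mem u v hu hv =>
      obtain ⟨i, rfl⟩ := hu; obtain ⟨j, rfl⟩ := hv; exact hanti i j
  | zero_left y hy => simp
  | zero_right x hx => simp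
  | add_left x y z hx hy hz h1 h2 => rw [add_mul, h1, h2, mul_add]; abel
  | add_right x y z hx hy hz h1 h2 => rw [mul_add, h1, h2, add_mul]; abel
  | smul_left r x y hx hy h => rw [smul_mul_assoc, h, mul_smul_comm]; simp
  | smul_right r x y hx hy h => rw [mul_smul_comm, h, smul_mul_assoc]; simp

/-- Gaussian integral representation of the tetrahedron weight (formula (8) of the
paper): `∬ exp(Φ₁₂₃₄) db⁽¹⁾ db⁽²⁾ = f₁₂₃₄` (integration over `b⁽¹⁾` first, then
`b⁽²⁾`).  Here `exp(Φ₁₂₃₄)` terminates: `Φ₁₂₃₄ ^ 3 = 0`. -/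
theorem gaussian_f
    {F : Type*} [Field F] {Λ : Type*} [Ring Λ] [Algebra F Λ]
    (hchar : (2 : F) ≠ 0)
    (ζ : Fin 5 → F)
    (h34 : ζ 2 ≠ ζ 3)
    (e : Finset (Fin 5) ⊕ Fin 2 → Λ)
    (hanti : ∀ i j, e i * e j = -(e j * e i))
    (hsq : ∀ i, e i * e i = 0)
    (B1 B2 : Λ →ₗ[F] Λ)
    (hB1 : IsBerezin F e (Sum.inr 0) B1)
    (hB2 : IsBerezin F e (Sum.inr 1) B2) :
    B2 (B1 (expT F 3 (PhiT ζ e 0 1 0 1 2 3))) =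
      fw ζ (fun S => e (Sum.inl S)) 0 1 2 3 := by
  obtain ⟨hB1z, hB1i⟩ := hB1
  obtain ⟨hB2z, hB2i⟩ := hB2
  have h34' : ζ 2 - ζ 3 ≠ 0 := sub_ne_zero.mpr h34
  set b1 : Λ := e (Sum.inr 0) with hb1
  set b2 : Λ := e (Sum.inr 1) with hb2
  set A : Λ := (ζ 1 - ζ 2) • e (Sum.inl {0,1,2}) - (ζ 1 - ζ 3) • e (Sum.inl {0,1,3})
      + (ζ 2 - ζ 3) • e (Sum.inl {0,2,3}) with hA
  set C : Λ := ((ζ 0 - ζ 2)/(ζ 2 - ζ 3)) • e (Sum.inl {0,1,2})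
      - ((ζ 0 - ζ 3)/(ζ 2 - ζ 3)) • e (Sum.inl {0,1,3}) + e (Sum.inl {1,2,3}) with hC
  have hPhi : PhiT ζ e 0 1 0 1 2 3 = b1 * A + b2 * C := rfl
  -- span memberships
  have hspan : ∀ i, e i ∈ Submodule.span F (Set.range e) :=
    fun i => Submodule.subset_span ⟨i, rfl⟩
  have hAsp : A ∈ Submodule.span F (Set.range e) := by
    rw [hA]
    exact add_mem (sub_mem (Submodule.smul_mem _ _ (hspan _)) (Submodule.smul_mem _ _ (hspan _)))
      (Submodule.smul_mem _ _ (hspan _))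
  have hCsp : C ∈ Submodule.span F (Set.range e) := by
    rw [hC]
    exact add_mem (sub_mem (Submodule.smul_mem _ _ (hspan _)) (Submodule.smul_mem _ _ (hspan _)))
      (hspan _)
  have sAb1 : A * b1 = -(b1 * A) := span_anticomm e hanti hAsp (hspan _)
  have sAb2 : A * b2 = -(b2 * A) := span_anticomm e hanti hAsp (hspan _)
  have sCb1 : C * b1 = -(b1 * C) := span_anticomm e hanti hCsp (hspan _)
  have sCb2 : C * b2 = -(b2 * C) := span_anticomm e hanti hCsp (hspan _)
  have sCA : C * A = -(A * C) := span_anticomm e hanti hCsp hAsp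
  have sb2b1 : b2 * b1 = -(b1 * b2) := hanti _ _
  have sb2A : b2 * A = -(A * b2) := by rw [sAb2, neg_neg]
  have sb2C : b2 * C = -(C * b2) := by rw [sCb2, neg_neg]
  have hsq0 : b1 * b1 = 0 := hsq _
  have hsq1 : b2 * b2 = 0 := hsq _
  set Φ : Λ := b1 * A + b2 * C with hΦ
  set X : Λ := b1 * (b2 * (A * C)) with hX
  -- the square of Φ
  have t11 : (b1*A)*(b1*A) = 0 := by
    have h1 : (b1*A)*(b1*A) = b1*((A*b1)*A) := by noncomm_ring
    rw [h1, sAb1]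
    have h2 : b1*((-(b1*A))*A) = -((b1*b1)*(A*A)) := by noncomm_ring
    rw [h2, hsq0, zero_mul, neg_zero]
  have t22 : (b2*C)*(b2*C) = 0 := by
    have h1 : (b2*C)*(b2*C) = b2*((C*b2)*C) := by noncomm_ring
    rw [h1, sCb2]
    have h2 : b2*((-(b2*C))*C) = -((b2*b2)*(C*C)) := by noncomm_ring
    rw [h2, hsq1, zero_mul, neg_zero]
  have t12 : (b1*A)*(b2*C) = -X := by
    have h1 : (b1*A)*(b2*C) = b1*((A*b2)*C) := by noncomm_ring
    rw [h1, sAb2, hX]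
    noncomm_ring
  have t21 : (b2*C)*(b1*A) = -X := by
    have h1 : (b2*C)*(b1*A) = b2*((C*b1)*A) := by noncomm_ring
    rw [h1, sCb1]
    have h2 : b2*((-(b1*C))*A) = -((b2*b1)*(C*A)) := by noncomm_ring
    rw [h2, sb2b1, sCA, hX]
    noncomm_ring
  have hΦ2 : Φ * Φ = -(X + X) := by
    have h1 : Φ * Φ = (b1*A)*(b1*A) + (b1*A)*(b2*C) + ((b2*C)*(b1*A) + (b2*C)*(b2*C)) := by
      rw [hΦ]; noncomm_ring
    rw [h1, t11, t12, t21, t22]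
    abel
  -- the exponential
  have hexp : expT F 3 Φ = 1 + Φ + (2:F)⁻¹ • (Φ * Φ) := by
    rw [expT, Finset.sum_range_succ, Finset.sum_range_succ, Finset.sum_range_succ,
      Finset.sum_range_zero]
    norm_num [Nat.factorial, pow_succ]
  have hhalf : (2:F)⁻¹ • (Φ * Φ) = -X := by
    rw [hΦ2, smul_neg, ← two_smul F X, smul_smul, inv_mul_cancel₀ hchar, one_smul]
  -- move b1 to the right
  have hb1A : b1 * A = (-A) * b1 := by rw [neg_mul, sAb1, neg_neg]
  have hXb1 : -X = (b2*(A*C))*b1 := by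
    have h1 : (b2*(A*C))*b1 = b2*(A*(C*b1)) := by noncomm_ring
    rw [h1, sCb1]
    have h2 : b2*(A*(-(b1*C))) = -((b2*(A*b1))*C) := by noncomm_ring
    rw [h2, sAb1]
    have h3 : -((b2*(-(b1*A)))*C) = (b2*b1)*(A*C) := by noncomm_ring
    rw [h3, sb2b1, hX]
    noncomm_ring
  -- membership facts
  have gen : ∀ (j i : Finset (Fin 5) ⊕ Fin 2), j ≠ i → e j ∈ notInvolving F e i :=
    fun j i h => Algebra.subset_adjoin ⟨j, h, rfl⟩
  have memA0 : A ∈ notInvolving F e (Sum.inr 0) := by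
    rw [hA]
    exact add_mem (sub_mem (Subalgebra.smul_mem _ (gen _ _ (by simp)) _)
        (Subalgebra.smul_mem _ (gen _ _ (by simp)) _))
      (Subalgebra.smul_mem _ (gen _ _ (by simp)) _)
  have memC0 : C ∈ notInvolving F e (Sum.inr 0) := by
    rw [hC]
    exact add_mem (sub_mem (Subalgebra.smul_mem _ (gen _ _ (by simp)) _)
        (Subalgebra.smul_mem _ (gen _ _ (by simp)) _)) (gen _ _ (by simp))
  have memA1 : A ∈ notInvolving F e (Sum.inr 1) := by
    rw [hA]
    exact add_mem (sub_mem (Subalgebra.smul_mem _ (gen _ _ (by simp)) _)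
        (Subalgebra.smul_mem _ (gen _ _ (by simp)) _))
      (Subalgebra.smul_mem _ (gen _ _ (by simp)) _)
  have memC1 : C ∈ notInvolving F e (Sum.inr 1) := by
    rw [hC]
    exact add_mem (sub_mem (Subalgebra.smul_mem _ (gen _ _ (by simp)) _)
        (Subalgebra.smul_mem _ (gen _ _ (by simp)) _)) (gen _ _ (by simp))
  have memb2 : b2 ∈ notInvolving F e (Sum.inr 0) := gen _ _ (by simp)
  -- first Berezin integral
  have key : expT F 3 (PhiT ζ e 0 1 0 1 2 3) = (1 + b2*C) + (-A + b2*(A*C)) * b1 := by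
    rw [hPhi, hexp, hhalf, hXb1, hΦ, hb1A]
    noncomm_ring
  have step1 : B1 (expT F 3 (PhiT ζ e 0 1 0 1 2 3)) = -A + b2*(A*C) := by
    rw [key, map_add, hB1z _ (add_mem (one_mem _) (mul_mem memb2 memC0)),
      hB1i _ (add_mem (neg_mem memA0) (mul_mem memb2 (mul_mem memA0 memC0))), zero_add]
  -- second Berezin integral
  have hb2AC : b2*(A*C) = (A*C)*b2 := by
    rw [← mul_assoc, sb2A]
    have h1 : (-(A*b2))*C = -(A*(b2*C)) := by noncomm_ring
    rw [h1, sb2C]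
    noncomm_ring
  have step2 : B2 (-A + b2*(A*C)) = A*C := by
    rw [hb2AC, map_add, hB2z _ (neg_mem memA1), hB2i _ (mul_mem memA1 memC1), zero_add]
  rw [step1, step2]
  -- the explicit product
  have sq1 : e (Sum.inl ({0,1,2} : Finset (Fin 5))) * e (Sum.inl ({0,1,2} : Finset (Fin 5))) = 0 := hsq _
  have sq2 : e (Sum.inl ({0,1,3} : Finset (Fin 5))) * e (Sum.inl ({0,1,3} : Finset (Fin 5))) = 0 := hsq _
  have s21 : e (Sum.inl ({0,1,3} : Finset (Fin 5))) * e (Sum.inl ({0,1,2} : Finset (Fin 5)))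
      = -(e (Sum.inl ({0,1,2} : Finset (Fin 5))) * e (Sum.inl ({0,1,3} : Finset (Fin 5)))) := hanti _ _
  have s31 : e (Sum.inl ({0,2,3} : Finset (Fin 5))) * e (Sum.inl ({0,1,2} : Finset (Fin 5)))
      = -(e (Sum.inl ({0,1,2} : Finset (Fin 5))) * e (Sum.inl ({0,2,3} : Finset (Fin 5)))) := hanti _ _
  have s32 : e (Sum.inl ({0,2,3} : Finset (Fin 5))) * e (Sum.inl ({0,1,3} : Finset (Fin 5)))
      = -(e (Sum.inl ({0,1,3} : Finset (Fin 5))) * e (Sum.inl ({0,2,3} : Finset (Fin 5)))) := hanti _ _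
  rw [hA, hC]
  simp only [fw]
  simp only [add_mul, sub_mul, mul_add, mul_sub, smul_mul_assoc, mul_smul_comm, smul_smul,
    s21, s31, s32, sq1, sq2, smul_neg, smul_zero, neg_neg]
  match_scalars <;> field_simp <;> ring
end

section
/- Assume ζ_3 ≠ ζ_4 and let λ ∈ F. Set Γ_{1234} = Φ_{1234} + λ ζ_{13} ζ_{14} ζ_{23} ζ_{24} ζ_{34} a_{134} a_{234}. Then ∬ exp(Γ_{1234}) db^{(1)} db^{(2)} = g_{1234} = f_{1234} + λ (∏_{1≤i<j≤4} ζ_{ij}) a_{123} a_{124} a_{134} a_{234} (integration over b^{(1)} first, then b^{(2)}). -/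
/-- `c_{i₁i₂i₃i₄} = ∏_{1 ≤ k < l ≤ 4} ζ_{i_k i_l}`. -/
def cc {F : Type*} [Field F] (ζ : Fin 5 → F) (i₁ i₂ i₃ i₄ : Fin 5) : F :=
  (ζ i₁ - ζ i₂) * (ζ i₁ - ζ i₃) * (ζ i₁ - ζ i₄) * (ζ i₂ - ζ i₃) * (ζ i₂ - ζ i₄) * (ζ i₃ - ζ i₄)

/-- The deformed weight `g_{i₁i₂i₃i₄} = f_{i₁i₂i₃i₄} + ε λ c_{i₁i₂i₃i₄}
a_{i₁i₂i₃} a_{i₁i₂i₄} a_{i₁i₃i₄} a_{i₂i₃i₄}`, with orientation sign `eps = ε_{i₁i₂i₃i₄}`. -/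
def gw {F : Type*} [Field F] {Λ : Type*} [Ring Λ] [Algebra F Λ]
    (ζ : Fin 5 → F) (a : Finset (Fin 5) → Λ) (lam eps : F) (i₁ i₂ i₃ i₄ : Fin 5) : Λ :=
  fw ζ a i₁ i₂ i₃ i₄ +
    (eps * lam * cc ζ i₁ i₂ i₃ i₄) •
      (a {i₁, i₂, i₃} * a {i₁, i₂, i₄} * a {i₁, i₃, i₄} * a {i₂, i₃, i₄})

section bzhelpers
variable {F : Type*} [Field F] {Λ : Type*} [Ring Λ] [Algebra F Λ]

lemma bz_swap_neg {u w : Λ} (h : u * w = -(w * u)) (t : Λ) :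
    u * (w * t) = -(w * (u * t)) := by rw [← mul_assoc, h, neg_mul, mul_assoc]

lemma bz_swap_comm {u w : Λ} (h : u * w = w * u) (t : Λ) :
    u * (w * t) = w * (u * t) := by rw [← mul_assoc, h, mul_assoc]

lemma bz_sq_cancel {w : Λ} (h : w * w = 0) (t : Λ) : w * (w * t) = 0 := by
  rw [← mul_assoc, h, zero_mul]

lemma bz_comm_of_anti2 {x y w : Λ} (hx : x * w = -(w * x)) (hy : y * w = -(w * y)) :
    (x * y) * w = w * (x * y) := by
  rw [mul_assoc, hy, mul_neg, ← mul_assoc, hx, neg_mul, neg_neg, mul_assoc]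

lemma bz_anti_mul_comm {x z w : Λ} (hx : x * w = -(w * x)) (hz : z * w = w * z) :
    (x * z) * w = -(w * (x * z)) := by
  rw [mul_assoc, hz, ← mul_assoc, hx, neg_mul, mul_assoc]

lemma bz_comm_smul (c : F) {u w : Λ} (hu : u * w = w * u) :
    (c • u) * w = w * (c • u) := by rw [smul_mul_assoc, mul_smul_comm, hu]

lemma bz_sq2 {x y : Λ} (hx : x * x = 0) (hyx : y * x = -(x * y)) :
    (x * y) * (x * y) = 0 := by
  rw [mul_assoc, ← mul_assoc y, hyx]
  simp [← mul_assoc, hx]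

end bzhelpers


theorem bz_aux {F : Type*} [Field F] {Λ : Type*} [Ring Λ] [Algebra F Λ]
    (hchar : (2:F) ≠ 0) (hsix : (6:F) ≠ 0)
    {b1 b2 X Y Z : Λ} {N1 N2 : Subalgebra F Λ} {B1 B2 : Λ →ₗ[F] Λ}
    (hb1b1 : b1 * b1 = 0) (hb2b2 : b2 * b2 = 0) (hb21 : b2 * b1 = -(b1 * b2))
    (hXb1 : X * b1 = -(b1 * X)) (hXb2 : X * b2 = -(b2 * X))
    (hYb1 : Y * b1 = -(b1 * Y)) (hYb2 : Y * b2 = -(b2 * Y))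
    (hZb1 : Z * b1 = b1 * Z) (hZb2 : Z * b2 = b2 * Z)
    (hXY : X * Y = -(Y * X)) (hZX : Z * X = X * Z) (hZY : Z * Y = Y * Z)
    (hZZ : Z * Z = 0)
    (hX1 : X ∈ N1) (hY1 : Y ∈ N1) (hZ1 : Z ∈ N1) (hb2N1 : b2 ∈ N1)
    (hX2 : X ∈ N2) (hY2 : Y ∈ N2) (hZ2 : Z ∈ N2)
    (hB1z : ∀ g ∈ N1, B1 g = 0) (hB1m : ∀ h ∈ N1, B1 (h * b1) = h)
    (hB2z : ∀ g ∈ N2, B2 g = 0) (hB2m : ∀ h ∈ N2, B2 (h * b2) = h) :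
    B2 (B1 (expT F 4 (b1 * X + b2 * Y + Z))) = -(Y * X) + -(Y * (X * Z)) := by
  have h2 : (b1*X + b2*Y + Z) * (b1*X + b2*Y + Z)
      = (2:F) • (b1*(b2*(Y*X)) + b1*(X*Z) + b2*(Y*Z)) := by
    simp only [add_mul, mul_add, mul_assoc, bz_swap_neg hXb1, bz_swap_neg hXb2,
      bz_swap_neg hYb1, bz_swap_neg hYb2, bz_swap_comm hZb1, bz_swap_comm hZb2,
      bz_swap_neg hb21, bz_swap_neg hXY, bz_swap_comm hZX, bz_swap_comm hZY,
      hXb1, hXb2, hYb1, hYb2, hZb1, hZb2, hb21, hXY, hZX, hZY,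
      bz_sq_cancel hb1b1, bz_sq_cancel hb2b2, bz_sq_cancel hZZ,
      hb1b1, hb2b2, hZZ,
      mul_neg, neg_neg, neg_mul, mul_zero, zero_mul, neg_zero, add_zero, zero_add]
    module
  have h3 : ((b1*X + b2*Y + Z) * (b1*X + b2*Y + Z)) * (b1*X + b2*Y + Z)
      = (6:F) • (b1*(b2*(Y*(X*Z)))) := by
    simp only [add_mul, mul_add, mul_assoc, bz_swap_neg hXb1, bz_swap_neg hXb2,
      bz_swap_neg hYb1, bz_swap_neg hYb2, bz_swap_comm hZb1, bz_swap_comm hZb2,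
      bz_swap_neg hb21, bz_swap_neg hXY, bz_swap_comm hZX, bz_swap_comm hZY,
      hXb1, hXb2, hYb1, hYb2, hZb1, hZb2, hb21, hXY, hZX, hZY,
      bz_sq_cancel hb1b1, bz_sq_cancel hb2b2, bz_sq_cancel hZZ,
      hb1b1, hb2b2, hZZ,
      mul_neg, neg_neg, neg_mul, mul_zero, zero_mul, neg_zero, add_zero, zero_add]
    module
  have hexp : expT F 4 (b1*X + b2*Y + Z)
      = 1 + (b1*X + b2*Y + Z) + (b1*(b2*(Y*X)) + b1*(X*Z) + b2*(Y*Z))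
        + b1*(b2*(Y*(X*Z))) := by
    rw [expT, show (4:ℕ) = 3+1 from rfl, Finset.sum_range_succ,
        show (3:ℕ) = 2+1 from rfl, Finset.sum_range_succ,
        show (2:ℕ) = 1+1 from rfl, Finset.sum_range_succ, Finset.sum_range_one]
    norm_num [pow_succ, Nat.factorial]
    rw [h3, h2, inv_smul_smul₀ hchar, inv_smul_smul₀ hsix]
  have hYXb1 : (Y*X)*b1 = b1*(Y*X) := bz_comm_of_anti2 hYb1 hXb1
  have hXZb1 : (X*Z)*b1 = -(b1*(X*Z)) := bz_anti_mul_comm hXb1 hZb1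
  have key1 : ∀ u, u ∈ N1 → u * b1 = -(b1 * u) → B1 (b1 * u) = -u := by
    intro u hu hc
    rw [show b1 * u = (-u) * b1 by rw [neg_mul, hc, neg_neg]]
    exact hB1m _ (neg_mem hu)
  have c1 : B1 (1 : Λ) = 0 := hB1z 1 (one_mem N1)
  have cP : B1 (b1*X) = -X := key1 X hX1 hXb1
  have cQ : B1 (b2*Y) = 0 := hB1z _ (mul_mem hb2N1 hY1)
  have cZ : B1 Z = 0 := hB1z _ hZ1
  have cW : B1 (b1*(b2*(Y*X))) = -(b2*(Y*X)) :=
    key1 _ (mul_mem hb2N1 (mul_mem hY1 hX1)) (bz_anti_mul_comm hb21 hYXb1)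
  have cPZ : B1 (b1*(X*Z)) = -(X*Z) := key1 _ (mul_mem hX1 hZ1) hXZb1
  have cQZ : B1 (b2*(Y*Z)) = 0 := hB1z _ (mul_mem hb2N1 (mul_mem hY1 hZ1))
  have cV3 : B1 (b1*(b2*(Y*(X*Z)))) = -(b2*(Y*(X*Z))) :=
    key1 _ (mul_mem hb2N1 (mul_mem hY1 (mul_mem hX1 hZ1)))
      (bz_anti_mul_comm hb21 (bz_comm_of_anti2 hYb1 hXZb1))
  have key2 : ∀ u, u ∈ N2 → u * b2 = b2 * u → B2 (b2 * u) = u := by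
    intro u hu hc
    rw [← hc]
    exact hB2m _ hu
  have dX : B2 X = 0 := hB2z X hX2
  have dXZ : B2 (X*Z) = 0 := hB2z _ (mul_mem hX2 hZ2)
  have d3 : B2 (b2*(Y*X)) = Y*X := key2 _ (mul_mem hY2 hX2) (bz_comm_of_anti2 hYb2 hXb2)
  have d4 : B2 (b2*(Y*(X*Z))) = Y*(X*Z) :=
    key2 _ (mul_mem hY2 (mul_mem hX2 hZ2))
      (bz_comm_of_anti2 hYb2 (bz_anti_mul_comm hXb2 hZb2))
  rw [hexp]
  simp only [map_add, c1, cP, cQ, cZ, cW, cPZ, cQZ, cV3, map_neg, map_zero, dX, dXZ, d3, d4]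
  abel



set_option maxHeartbeats 2000000

/-- Gaussian integral representation of the deformed weight `g₁₂₃₄`:
with `Γ₁₂₃₄ = Φ₁₂₃₄ + λ ζ₁₃ ζ₁₄ ζ₂₃ ζ₂₄ ζ₃₄ a₁₃₄ a₂₃₄`, one has
`∬ exp(Γ₁₂₃₄) db⁽¹⁾ db⁽²⁾ = g₁₂₃₄ = f₁₂₃₄ + λ (∏_{i<j} ζ_{ij}) a₁₂₃ a₁₂₄ a₁₃₄ a₂₃₄`.
Here `exp(Γ₁₂₃₄)` terminates: `Γ₁₂₃₄ ^ 4 = 0`; for its Taylor series the factorials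
`n!`, `n < 4`, must be invertible in `F`. -/
theorem gaussian_g
    {F : Type*} [Field F] {Λ : Type*} [Ring Λ] [Algebra F Λ]
    (hchar : (2 : F) ≠ 0)
    (ζ : Fin 5 → F)
    (hfac : ∀ n < 4, (n.factorial : F) ≠ 0)
    (h34 : ζ 2 ≠ ζ 3) (lam : F)
    (e : Finset (Fin 5) ⊕ Fin 2 → Λ)
    (hanti : ∀ i j, e i * e j = -(e j * e i))
    (hsq : ∀ i, e i * e i = 0)
    (B1 B2 : Λ →ₗ[F] Λ)
    (hB1 : IsBerezin F e (Sum.inr 0) B1)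
    (hB2 : IsBerezin F e (Sum.inr 1) B2) :
    B2 (B1 (expT F 4
        (PhiT ζ e 0 1 0 1 2 3 +
          (lam * ((ζ 0 - ζ 2) * (ζ 0 - ζ 3) * (ζ 1 - ζ 2) * (ζ 1 - ζ 3) * (ζ 2 - ζ 3))) •
            (e (Sum.inl {0, 2, 3}) * e (Sum.inl {1, 2, 3}))))) =
      gw ζ (fun S => e (Sum.inl S)) lam 1 0 1 2 3 := by
  obtain ⟨hB1z, hB1m⟩ := hB1
  obtain ⟨hB2z, hB2m⟩ := hB2
  have hsix : (6 : F) ≠ 0 := by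
    have h := hfac 3 (by norm_num)
    norm_num [Nat.factorial] at h
    exact h
  have mS : ∀ S : Finset (Fin 5),
      e (Sum.inl S) ∈ Submodule.span F (Set.range fun T : Finset (Fin 5) => e (Sum.inl T)) :=
    fun S => Submodule.subset_span ⟨S, rfl⟩
  have hlin : ∀ (i : Finset (Fin 5) ⊕ Fin 2), ∀ u ∈
      Submodule.span F (Set.range fun T : Finset (Fin 5) => e (Sum.inl T)),
      u * e i = -(e i * u) := by
    intro i u hu
    induction hu using Submodule.span_induction with
    | mem x hx => obtain ⟨S, rfl⟩ := hx; exact hanti _ i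
    | zero => simp
    | add u v _ _ hu' hv' => rw [add_mul, mul_add, hu', hv', neg_add]
    | smul c u _ hu' => rw [smul_mul_assoc, mul_smul_comm, hu', smul_neg]
  have hlin2 : ∀ u ∈
      Submodule.span F (Set.range fun T : Finset (Fin 5) => e (Sum.inl T)), ∀ v ∈
      Submodule.span F (Set.range fun T : Finset (Fin 5) => e (Sum.inl T)),
      u * v = -(v * u) := by
    intro u hu v hv
    induction hv using Submodule.span_induction with
    | mem x hx => obtain ⟨S, rfl⟩ := hx; exact hlin _ u hu
    | zero => simp
    | add v w _ _ hv' hw' => rw [mul_add, add_mul, hv', hw', neg_add]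
    | smul c v _ hv' => rw [mul_smul_comm, smul_mul_assoc, hv', smul_neg]
  have hXsp : ((ζ 1 - ζ 2) • e (Sum.inl ({0, 1, 2} : Finset (Fin 5))) - (ζ 1 - ζ 3) • e (Sum.inl ({0, 1, 3} : Finset (Fin 5))) + (ζ 2 - ζ 3) • e (Sum.inl ({0, 2, 3} : Finset (Fin 5)))) ∈
      Submodule.span F (Set.range fun T : Finset (Fin 5) => e (Sum.inl T)) :=
    add_mem (sub_mem (Submodule.smul_mem _ _ (mS _)) (Submodule.smul_mem _ _ (mS _)))
      (Submodule.smul_mem _ _ (mS _))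
  have hYsp : (((ζ 0 - ζ 2) / (ζ 2 - ζ 3)) • e (Sum.inl ({0, 1, 2} : Finset (Fin 5))) - ((ζ 0 - ζ 3) / (ζ 2 - ζ 3)) • e (Sum.inl ({0, 1, 3} : Finset (Fin 5))) + e (Sum.inl ({1, 2, 3} : Finset (Fin 5)))) ∈
      Submodule.span F (Set.range fun T : Finset (Fin 5) => e (Sum.inl T)) :=
    add_mem (sub_mem (Submodule.smul_mem _ _ (mS _)) (Submodule.smul_mem _ _ (mS _))) (mS _)
  have hXb1 : ((ζ 1 - ζ 2) • e (Sum.inl ({0, 1, 2} : Finset (Fin 5))) - (ζ 1 - ζ 3) • e (Sum.inl ({0, 1, 3} : Finset (Fin 5))) + (ζ 2 - ζ 3) • e (Sum.inl ({0, 2, 3} : Finset (Fin 5)))) * e (Sum.inr 0) = -(e (Sum.inr 0) * ((ζ 1 - ζ 2) • e (Sum.inl ({0, 1, 2} : Finset (Fin 5))) - (ζ 1 - ζ 3) • e (Sum.inl ({0, 1, 3} : Finset (Fin 5))) + (ζ 2 - ζ 3) • e (Sum.inl ({0, 2, 3} : Finset (Fin 5))))) := hlin _ _ hXsp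
  have hXb2 : ((ζ 1 - ζ 2) • e (Sum.inl ({0, 1, 2} : Finset (Fin 5))) - (ζ 1 - ζ 3) • e (Sum.inl ({0, 1, 3} : Finset (Fin 5))) + (ζ 2 - ζ 3) • e (Sum.inl ({0, 2, 3} : Finset (Fin 5)))) * e (Sum.inr 1) = -(e (Sum.inr 1) * ((ζ 1 - ζ 2) • e (Sum.inl ({0, 1, 2} : Finset (Fin 5))) - (ζ 1 - ζ 3) • e (Sum.inl ({0, 1, 3} : Finset (Fin 5))) + (ζ 2 - ζ 3) • e (Sum.inl ({0, 2, 3} : Finset (Fin 5))))) := hlin _ _ hXsp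
  have hYb1 : (((ζ 0 - ζ 2) / (ζ 2 - ζ 3)) • e (Sum.inl ({0, 1, 2} : Finset (Fin 5))) - ((ζ 0 - ζ 3) / (ζ 2 - ζ 3)) • e (Sum.inl ({0, 1, 3} : Finset (Fin 5))) + e (Sum.inl ({1, 2, 3} : Finset (Fin 5)))) * e (Sum.inr 0) = -(e (Sum.inr 0) * (((ζ 0 - ζ 2) / (ζ 2 - ζ 3)) • e (Sum.inl ({0, 1, 2} : Finset (Fin 5))) - ((ζ 0 - ζ 3) / (ζ 2 - ζ 3)) • e (Sum.inl ({0, 1, 3} : Finset (Fin 5))) + e (Sum.inl ({1, 2, 3} : Finset (Fin 5))))) := hlin _ _ hYsp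
  have hYb2 : (((ζ 0 - ζ 2) / (ζ 2 - ζ 3)) • e (Sum.inl ({0, 1, 2} : Finset (Fin 5))) - ((ζ 0 - ζ 3) / (ζ 2 - ζ 3)) • e (Sum.inl ({0, 1, 3} : Finset (Fin 5))) + e (Sum.inl ({1, 2, 3} : Finset (Fin 5)))) * e (Sum.inr 1) = -(e (Sum.inr 1) * (((ζ 0 - ζ 2) / (ζ 2 - ζ 3)) • e (Sum.inl ({0, 1, 2} : Finset (Fin 5))) - ((ζ 0 - ζ 3) / (ζ 2 - ζ 3)) • e (Sum.inl ({0, 1, 3} : Finset (Fin 5))) + e (Sum.inl ({1, 2, 3} : Finset (Fin 5))))) := hlin _ _ hYsp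
  have hXY : ((ζ 1 - ζ 2) • e (Sum.inl ({0, 1, 2} : Finset (Fin 5))) - (ζ 1 - ζ 3) • e (Sum.inl ({0, 1, 3} : Finset (Fin 5))) + (ζ 2 - ζ 3) • e (Sum.inl ({0, 2, 3} : Finset (Fin 5)))) * (((ζ 0 - ζ 2) / (ζ 2 - ζ 3)) • e (Sum.inl ({0, 1, 2} : Finset (Fin 5))) - ((ζ 0 - ζ 3) / (ζ 2 - ζ 3)) • e (Sum.inl ({0, 1, 3} : Finset (Fin 5))) + e (Sum.inl ({1, 2, 3} : Finset (Fin 5)))) = -((((ζ 0 - ζ 2) / (ζ 2 - ζ 3)) • e (Sum.inl ({0, 1, 2} : Finset (Fin 5))) - ((ζ 0 - ζ 3) / (ζ 2 - ζ 3)) • e (Sum.inl ({0, 1, 3} : Finset (Fin 5))) + e (Sum.inl ({1, 2, 3} : Finset (Fin 5)))) * ((ζ 1 - ζ 2) • e (Sum.inl ({0, 1, 2} : Finset (Fin 5))) - (ζ 1 - ζ 3) • e (Sum.inl ({0, 1, 3} : Finset (Fin 5))) + (ζ 2 - ζ 3) • e (Sum.inl ({0, 2, 3} : Finset (Fin 5)))))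 := hlin2 _ hXsp _ hYsp
  have hZb1 : ((lam * ((ζ 0 - ζ 2) * (ζ 0 - ζ 3) * (ζ 1 - ζ 2) * (ζ 1 - ζ 3) * (ζ 2 - ζ 3))) • (e (Sum.inl ({0, 2, 3} : Finset (Fin 5))) * e (Sum.inl ({1, 2, 3} : Finset (Fin 5))))) * e (Sum.inr 0) = e (Sum.inr 0) * ((lam * ((ζ 0 - ζ 2) * (ζ 0 - ζ 3) * (ζ 1 - ζ 2) * (ζ 1 - ζ 3) * (ζ 2 - ζ 3))) • (e (Sum.inl ({0, 2, 3} : Finset (Fin 5))) * e (Sum.inl ({1, 2, 3} : Finset (Fin 5))))) :=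
    bz_comm_smul _ (bz_comm_of_anti2 (hanti _ _) (hanti _ _))
  have hZb2 : ((lam * ((ζ 0 - ζ 2) * (ζ 0 - ζ 3) * (ζ 1 - ζ 2) * (ζ 1 - ζ 3) * (ζ 2 - ζ 3))) • (e (Sum.inl ({0, 2, 3} : Finset (Fin 5))) * e (Sum.inl ({1, 2, 3} : Finset (Fin 5))))) * e (Sum.inr 1) = e (Sum.inr 1) * ((lam * ((ζ 0 - ζ 2) * (ζ 0 - ζ 3) * (ζ 1 - ζ 2) * (ζ 1 - ζ 3) * (ζ 2 - ζ 3))) • (e (Sum.inl ({0, 2, 3} : Finset (Fin 5))) * e (Sum.inl ({1, 2, 3} : Finset (Fin 5))))) :=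
    bz_comm_smul _ (bz_comm_of_anti2 (hanti _ _) (hanti _ _))
  have hZsp : ∀ v ∈
      Submodule.span F (Set.range fun T : Finset (Fin 5) => e (Sum.inl T)),
      ((lam * ((ζ 0 - ζ 2) * (ζ 0 - ζ 3) * (ζ 1 - ζ 2) * (ζ 1 - ζ 3) * (ζ 2 - ζ 3))) • (e (Sum.inl ({0, 2, 3} : Finset (Fin 5))) * e (Sum.inl ({1, 2, 3} : Finset (Fin 5))))) * v = v * ((lam * ((ζ 0 - ζ 2) * (ζ 0 - ζ 3) * (ζ 1 - ζ 2) * (ζ 1 - ζ 3) * (ζ 2 - ζ 3))) • (e (Sum.inl ({0, 2, 3} : Finset (Fin 5))) * e (Sum.inl ({1, 2, 3} : Finset (Fin 5))))) := fun v hv =>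
    bz_comm_smul _ (bz_comm_of_anti2 (hlin2 _ (mS _) v hv) (hlin2 _ (mS _) v hv))
  have hZX : ((lam * ((ζ 0 - ζ 2) * (ζ 0 - ζ 3) * (ζ 1 - ζ 2) * (ζ 1 - ζ 3) * (ζ 2 - ζ 3))) • (e (Sum.inl ({0, 2, 3} : Finset (Fin 5))) * e (Sum.inl ({1, 2, 3} : Finset (Fin 5))))) * ((ζ 1 - ζ 2) • e (Sum.inl ({0, 1, 2} : Finset (Fin 5))) - (ζ 1 - ζ 3) • e (Sum.inl ({0, 1, 3} : Finset (Fin 5))) + (ζ 2 - ζ 3) • e (Sum.inl ({0, 2, 3} : Finset (Fin 5)))) = ((ζ 1 - ζ 2) • e (Sum.inl ({0, 1, 2} : Finset (Fin 5))) - (ζ 1 - ζ 3) • e (Sum.inl ({0, 1, 3} : Finset (Fin 5))) + (ζ 2 - ζ 3) • e (Sum.inl ({0, 2, 3} : Finset (Fin 5)))) * ((lam * ((ζ 0 - ζ 2) * (ζ 0 - ζ 3) * (ζ 1 - ζ 2) * (ζ 1 - ζ 3) * (ζ 2 - ζ 3))) • (e (Sum.inl ({0, 2, 3} : Finset (Fin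 5))) * e (Sum.inl ({1, 2, 3} : Finset (Fin 5))))) := hZsp _ hXsp
  have hZY : ((lam * ((ζ 0 - ζ 2) * (ζ 0 - ζ 3) * (ζ 1 - ζ 2) * (ζ 1 - ζ 3) * (ζ 2 - ζ 3))) • (e (Sum.inl ({0, 2, 3} : Finset (Fin 5))) * e (Sum.inl ({1, 2, 3} : Finset (Fin 5))))) * (((ζ 0 - ζ 2) / (ζ 2 - ζ 3)) • e (Sum.inl ({0, 1, 2} : Finset (Fin 5))) - ((ζ 0 - ζ 3) / (ζ 2 - ζ 3)) • e (Sum.inl ({0, 1, 3} : Finset (Fin 5))) + e (Sum.inl ({1, 2, 3} : Finset (Fin 5)))) = (((ζ 0 - ζ 2) / (ζ 2 - ζ 3)) • e (Sum.inl ({0, 1, 2} : Finset (Fin 5))) - ((ζ 0 - ζ 3) / (ζ 2 - ζ 3)) • e (Sum.inl ({0, 1, 3} : Finset (Fin 5))) + e (Sum.inl ({1, 2, 3} : Finset (Fin 5)))) * ((lam * ((ζ 0 - ζ 2) * (ζ 0 - ζ 3) * (ζ 1 - ζ 2) * (ζ 1 - ζ 3) * (ζ 2 - ζ 3))) • (e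 (Sum.inl ({0, 2, 3} : Finset (Fin 5))) * e (Sum.inl ({1, 2, 3} : Finset (Fin 5))))) := hZsp _ hYsp
  have hZZ : ((lam * ((ζ 0 - ζ 2) * (ζ 0 - ζ 3) * (ζ 1 - ζ 2) * (ζ 1 - ζ 3) * (ζ 2 - ζ 3))) • (e (Sum.inl ({0, 2, 3} : Finset (Fin 5))) * e (Sum.inl ({1, 2, 3} : Finset (Fin 5))))) * ((lam * ((ζ 0 - ζ 2) * (ζ 0 - ζ 3) * (ζ 1 - ζ 2) * (ζ 1 - ζ 3) * (ζ 2 - ζ 3))) • (e (Sum.inl ({0, 2, 3} : Finset (Fin 5))) * e (Sum.inl ({1, 2, 3} : Finset (Fin 5))))) = 0 := by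
    rw [smul_mul_assoc, mul_smul_comm, bz_sq2 (hsq _) (hanti _ _), smul_zero, smul_zero]
  have mN1a : ∀ S : Finset (Fin 5),
      e (Sum.inl S) ∈ notInvolving F e (Sum.inr 0) :=
    fun S => Algebra.subset_adjoin ⟨Sum.inl S, by simp, rfl⟩
  have mN2a : ∀ S : Finset (Fin 5),
      e (Sum.inl S) ∈ notInvolving F e (Sum.inr 1) :=
    fun S => Algebra.subset_adjoin ⟨Sum.inl S, by simp, rfl⟩
  have spN1 : ∀ v ∈
      Submodule.span F (Set.range fun T : Finset (Fin 5) => e (Sum.inl T)),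
      v ∈ notInvolving F e (Sum.inr 0) := by
    intro v hv
    induction hv using Submodule.span_induction with
    | mem x hx => obtain ⟨S, rfl⟩ := hx; exact mN1a S
    | zero => exact zero_mem _
    | add v w _ _ hv' hw' => exact add_mem hv' hw'
    | smul c v _ hv' => exact Subalgebra.smul_mem _ hv' _
  have spN2 : ∀ v ∈
      Submodule.span F (Set.range fun T : Finset (Fin 5) => e (Sum.inl T)),
      v ∈ notInvolving F e (Sum.inr 1) := by
    intro v hv
    induction hv using Submodule.span_induction with
    | mem x hx => obtain ⟨S, rfl⟩ := hx; exact mN2a S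
    | zero => exact zero_mem _
    | add v w _ _ hv' hw' => exact add_mem hv' hw'
    | smul c v _ hv' => exact Subalgebra.smul_mem _ hv' _
  have hX1 : ((ζ 1 - ζ 2) • e (Sum.inl ({0, 1, 2} : Finset (Fin 5))) - (ζ 1 - ζ 3) • e (Sum.inl ({0, 1, 3} : Finset (Fin 5))) + (ζ 2 - ζ 3) • e (Sum.inl ({0, 2, 3} : Finset (Fin 5)))) ∈ notInvolving F e (Sum.inr 0) := spN1 _ hXsp
  have hY1 : (((ζ 0 - ζ 2) / (ζ 2 - ζ 3)) • e (Sum.inl ({0, 1, 2} : Finset (Fin 5))) - ((ζ 0 - ζ 3) / (ζ 2 - ζ 3)) • e (Sum.inl ({0, 1, 3} : Finset (Fin 5))) + e (Sum.inl ({1, 2, 3} : Finset (Fin 5)))) ∈ notInvolving F e (Sum.inr 0) := spN1 _ hYsp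
  have hX2 : ((ζ 1 - ζ 2) • e (Sum.inl ({0, 1, 2} : Finset (Fin 5))) - (ζ 1 - ζ 3) • e (Sum.inl ({0, 1, 3} : Finset (Fin 5))) + (ζ 2 - ζ 3) • e (Sum.inl ({0, 2, 3} : Finset (Fin 5)))) ∈ notInvolving F e (Sum.inr 1) := spN2 _ hXsp
  have hY2 : (((ζ 0 - ζ 2) / (ζ 2 - ζ 3)) • e (Sum.inl ({0, 1, 2} : Finset (Fin 5))) - ((ζ 0 - ζ 3) / (ζ 2 - ζ 3)) • e (Sum.inl ({0, 1, 3} : Finset (Fin 5))) + e (Sum.inl ({1, 2, 3} : Finset (Fin 5)))) ∈ notInvolving F e (Sum.inr 1) := spN2 _ hYsp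
  have hZ1 : ((lam * ((ζ 0 - ζ 2) * (ζ 0 - ζ 3) * (ζ 1 - ζ 2) * (ζ 1 - ζ 3) * (ζ 2 - ζ 3))) • (e (Sum.inl ({0, 2, 3} : Finset (Fin 5))) * e (Sum.inl ({1, 2, 3} : Finset (Fin 5))))) ∈ notInvolving F e (Sum.inr 0) :=
    Subalgebra.smul_mem _ (mul_mem (mN1a _) (mN1a _)) _
  have hZ2 : ((lam * ((ζ 0 - ζ 2) * (ζ 0 - ζ 3) * (ζ 1 - ζ 2) * (ζ 1 - ζ 3) * (ζ 2 - ζ 3))) • (e (Sum.inl ({0, 2, 3} : Finset (Fin 5))) * e (Sum.inl ({1, 2, 3} : Finset (Fin 5))))) ∈ notInvolving F e (Sum.inr 1) :=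
    Subalgebra.smul_mem _ (mul_mem (mN2a _) (mN2a _)) _
  have hb2N1 : e (Sum.inr 1) ∈ notInvolving F e (Sum.inr 0) :=
    Algebra.subset_adjoin ⟨Sum.inr 1, by simp, rfl⟩
  have key := bz_aux hchar hsix (hsq (Sum.inr 0)) (hsq (Sum.inr 1))
    (hanti (Sum.inr 1) (Sum.inr 0)) hXb1 hXb2 hYb1 hYb2 hZb1 hZb2 hXY hZX hZY hZZ
    hX1 hY1 hZ1 hb2N1 hX2 hY2 hZ2 hB1z hB1m hB2z hB2m
  simp only [PhiT]
  rw [key]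
  simp only [gw, fw, cc]
  have hz : ζ 2 - ζ 3 ≠ 0 := sub_ne_zero_of_ne h34
  simp only [hanti (Sum.inl ({0, 1, 3} : Finset (Fin 5))) (Sum.inl ({0, 1, 2} : Finset (Fin 5))),
      bz_swap_neg (hanti (Sum.inl ({0, 1, 3} : Finset (Fin 5))) (Sum.inl ({0, 1, 2} : Finset (Fin 5)))),
      hanti (Sum.inl ({0, 2, 3} : Finset (Fin 5))) (Sum.inl ({0, 1, 2} : Finset (Fin 5))),
      bz_swap_neg (hanti (Sum.inl ({0, 2, 3} : Finset (Fin 5))) (Sum.inl ({0, 1, 2} : Finset (Fin 5)))),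
      hanti (Sum.inl ({0, 2, 3} : Finset (Fin 5))) (Sum.inl ({0, 1, 3} : Finset (Fin 5))),
      bz_swap_neg (hanti (Sum.inl ({0, 2, 3} : Finset (Fin 5))) (Sum.inl ({0, 1, 3} : Finset (Fin 5)))),
      hanti (Sum.inl ({1, 2, 3} : Finset (Fin 5))) (Sum.inl ({0, 1, 2} : Finset (Fin 5))),
      bz_swap_neg (hanti (Sum.inl ({1, 2, 3} : Finset (Fin 5))) (Sum.inl ({0, 1, 2} : Finset (Fin 5)))),
      hanti (Sum.inl ({1, 2, 3} : Finset (Fin 5))) (Sum.inl ({0, 1, 3} : Finset (Fin 5))),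
      bz_swap_neg (hanti (Sum.inl ({1, 2, 3} : Finset (Fin 5))) (Sum.inl ({0, 1, 3} : Finset (Fin 5)))),
      hanti (Sum.inl ({1, 2, 3} : Finset (Fin 5))) (Sum.inl ({0, 2, 3} : Finset (Fin 5))),
      bz_swap_neg (hanti (Sum.inl ({1, 2, 3} : Finset (Fin 5))) (Sum.inl ({0, 2, 3} : Finset (Fin 5)))),
      hsq (Sum.inl ({0, 1, 2} : Finset (Fin 5))),
      bz_sq_cancel (hsq (Sum.inl ({0, 1, 2} : Finset (Fin 5)))),
      hsq (Sum.inl ({0, 1, 3} : Finset (Fin 5))),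
      bz_sq_cancel (hsq (Sum.inl ({0, 1, 3} : Finset (Fin 5)))),
      hsq (Sum.inl ({0, 2, 3} : Finset (Fin 5))),
      bz_sq_cancel (hsq (Sum.inl ({0, 2, 3} : Finset (Fin 5)))),
      hsq (Sum.inl ({1, 2, 3} : Finset (Fin 5))),
      bz_sq_cancel (hsq (Sum.inl ({1, 2, 3} : Finset (Fin 5)))),
      mul_add, add_mul, sub_mul, mul_sub, smul_mul_assoc, mul_smul_comm, smul_smul,
      smul_add, smul_sub, smul_neg, mul_assoc, mul_neg, neg_mul, neg_neg,
      mul_zero, zero_mul, smul_zero, add_zero, zero_add, neg_zero, mul_one, one_mul]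
  match_scalars <;> field_simp <;> ring
end

section
/- Assume ζ_3 ≠ ζ_4 and let μ ∈ F. Set Ψ_{1234} = Φ_{1234} + μ b^{(2)} b^{(1)}. Then ∬ exp(Ψ_{1234}) db^{(1)} db^{(2)} = h_{1234} = f_{1234} + μ (integration over b^{(1)} first, then b^{(2)}). -/
/-- The deformed weight `h_{i₁i₂i₃i₄} = f_{i₁i₂i₃i₄} + ε μ` (with orientation
sign `eps = ε_{i₁i₂i₃i₄}`, and `μ` times the unit of `Λ`). -/
def hw {F : Type*} [Field F] {Λ : Type*} [Ring Λ] [Algebra F Λ]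
    (ζ : Fin 5 → F) (a : Finset (Fin 5) → Λ) (mu eps : F) (i₁ i₂ i₃ i₄ : Fin 5) : Λ :=
  fw ζ a i₁ i₂ i₃ i₄ + (eps * mu) • (1 : Λ)

/-- Gaussian integral representation of the deformed weight `h₁₂₃₄`:
with `Ψ₁₂₃₄ = Φ₁₂₃₄ + μ b⁽²⁾ b⁽¹⁾`, one has
`∬ exp(Ψ₁₂₃₄) db⁽¹⁾ db⁽²⁾ = h₁₂₃₄ = f₁₂₃₄ + μ`.
Here `exp(Ψ₁₂₃₄)` terminates: `Ψ₁₂₃₄ ^ 3 = 0`. -/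
theorem gaussian_h
    {F : Type*} [Field F] {Λ : Type*} [Ring Λ] [Algebra F Λ]
    (hchar : (2 : F) ≠ 0)
    (ζ : Fin 5 → F)
    (h34 : ζ 2 ≠ ζ 3) (mu : F)
    (e : Finset (Fin 5) ⊕ Fin 2 → Λ)
    (hanti : ∀ i j, e i * e j = -(e j * e i))
    (hsq : ∀ i, e i * e i = 0)
    (B1 B2 : Λ →ₗ[F] Λ)
    (hB1 : IsBerezin F e (Sum.inr 0) B1)
    (hB2 : IsBerezin F e (Sum.inr 1) B2) :
    B2 (B1 (expT F 3
        (PhiT ζ e 0 1 0 1 2 3 + mu • (e (Sum.inr 1) * e (Sum.inr 0))))) =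
      hw ζ (fun S => e (Sum.inl S)) mu 1 0 1 2 3 := by
  set b1 : Λ := e (Sum.inr 0) with hb1def
  set b2 : Λ := e (Sum.inr 1) with hb2def
  set g1 : Λ := e (Sum.inl {0,1,2}) with hg1def
  set g2 : Λ := e (Sum.inl {0,1,3}) with hg2def
  set g3 : Λ := e (Sum.inl {0,2,3}) with hg3def
  set g4 : Λ := e (Sum.inl {1,2,3}) with hg4def
  set X : Λ := (ζ 1 - ζ 2) • g1 - (ζ 1 - ζ 3) • g2 + (ζ 2 - ζ 3) • g3 with hXdef
  set Y : Λ := ((ζ 0 - ζ 2)/(ζ 2 - ζ 3)) • g1 - ((ζ 0 - ζ 3)/(ζ 2 - ζ 3)) • g2 + g4 with hYdef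
  have sqb1 : b1 * b1 = 0 := hsq _
  have sqb2 : b2 * b2 = 0 := hsq _
  have sq1 : g1 * g1 = 0 := hsq _
  have sq2 : g2 * g2 = 0 := hsq _
  have sq3 : g3 * g3 = 0 := hsq _
  have hb2b1 : b2 * b1 = -(b1 * b2) := hanti _ _
  have a1b1 : g1 * b1 = -(b1 * g1) := hanti _ _
  have a2b1 : g2 * b1 = -(b1 * g2) := hanti _ _
  have a3b1 : g3 * b1 = -(b1 * g3) := hanti _ _
  have a4b1 : g4 * b1 = -(b1 * g4) := hanti _ _
  have a1b2 : g1 * b2 = -(b2 * g1) := hanti _ _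
  have a2b2 : g2 * b2 = -(b2 * g2) := hanti _ _
  have a3b2 : g3 * b2 = -(b2 * g3) := hanti _ _
  have a4b2 : g4 * b2 = -(b2 * g4) := hanti _ _
  have a21 : g2 * g1 = -(g1 * g2) := hanti _ _
  have a31 : g3 * g1 = -(g1 * g3) := hanti _ _
  have a32 : g3 * g2 = -(g2 * g3) := hanti _ _
  have a41 : g4 * g1 = -(g1 * g4) := hanti _ _
  have a42 : g4 * g2 = -(g2 * g4) := hanti _ _
  have a43 : g4 * g3 = -(g3 * g4) := hanti _ _
  have hXb1 : X * b1 = -(b1 * X) := by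
    rw [hXdef]
    simp only [sub_mul, add_mul, smul_mul_assoc, mul_sub, mul_add, mul_smul_comm,
      a1b1, a2b1, a3b1]
    module
  have hXb2 : X * b2 = -(b2 * X) := by
    rw [hXdef]
    simp only [sub_mul, add_mul, smul_mul_assoc, mul_sub, mul_add, mul_smul_comm,
      a1b2, a2b2, a3b2]
    module
  have hYb1 : Y * b1 = -(b1 * Y) := by
    rw [hYdef]
    simp only [sub_mul, add_mul, smul_mul_assoc, mul_sub, mul_add, mul_smul_comm,
      a1b1, a2b1, a4b1]
    module
  have hYb2 : Y * b2 = -(b2 * Y) := by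
    rw [hYdef]
    simp only [sub_mul, add_mul, smul_mul_assoc, mul_sub, mul_add, mul_smul_comm,
      a1b2, a2b2, a4b2]
    module
  have hYX : Y * X = -(X * Y) := by
    rw [hXdef, hYdef]
    simp only [sub_mul, add_mul, smul_mul_assoc, mul_sub, mul_add, mul_smul_comm,
      smul_smul, a21, a31, a32, a41, a42, a43, sq1, sq2, sq3]
    module
  have hPP : (b1*X)*(b1*X) = 0 := by
    calc (b1*X)*(b1*X) = b1*((X*b1)*X) := by noncomm_ring
      _ = b1*((-(b1*X))*X) := by rw [hXb1]
      _ = -((b1*b1)*(X*X)) := by noncomm_ring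
      _ = 0 := by rw [sqb1]; simp
  have hQQ : (b2*Y)*(b2*Y) = 0 := by
    calc (b2*Y)*(b2*Y) = b2*((Y*b2)*Y) := by noncomm_ring
      _ = b2*((-(b2*Y))*Y) := by rw [hYb2]
      _ = -((b2*b2)*(Y*Y)) := by noncomm_ring
      _ = 0 := by rw [sqb2]; simp
  have hPQ : (b1*X)*(b2*Y) = -(b1*(b2*(X*Y))) := by
    calc (b1*X)*(b2*Y) = b1*((X*b2)*Y) := by noncomm_ring
      _ = b1*((-(b2*X))*Y) := by rw [hXb2]
      _ = -(b1*(b2*(X*Y))) := by noncomm_ring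
  have hQP : (b2*Y)*(b1*X) = -(b1*(b2*(X*Y))) := by
    calc (b2*Y)*(b1*X) = b2*((Y*b1)*X) := by noncomm_ring
      _ = b2*((-(b1*Y))*X) := by rw [hYb1]
      _ = -((b2*b1)*(Y*X)) := by noncomm_ring
      _ = -((-(b1*b2))*(-(X*Y))) := by rw [hb2b1, hYX]
      _ = -(b1*(b2*(X*Y))) := by noncomm_ring
  have hPZ : (b1*X)*(b2*b1) = 0 := by
    calc (b1*X)*(b2*b1) = b1*((X*b2)*b1) := by noncomm_ring
      _ = b1*((-(b2*X))*b1) := by rw [hXb2]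
      _ = -(b1*(b2*(X*b1))) := by noncomm_ring
      _ = -(b1*(b2*(-(b1*X)))) := by rw [hXb1]
      _ = (b1*(b2*b1))*X := by noncomm_ring
      _ = (b1*(-(b1*b2)))*X := by rw [hb2b1]
      _ = -((b1*b1)*(b2*X)) := by noncomm_ring
      _ = 0 := by rw [sqb1]; simp
  have hZP : (b2*b1)*(b1*X) = 0 := by
    calc (b2*b1)*(b1*X) = b2*((b1*b1)*X) := by noncomm_ring
      _ = 0 := by rw [sqb1]; simp
  have hQZ : (b2*Y)*(b2*b1) = 0 := by
    calc (b2*Y)*(b2*b1) = b2*((Y*b2)*b1) := by noncomm_ring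
      _ = b2*((-(b2*Y))*b1) := by rw [hYb2]
      _ = -((b2*b2)*(Y*b1)) := by noncomm_ring
      _ = 0 := by rw [sqb2]; simp
  have hb1b2 : b1 * b2 = -(b2 * b1) := by rw [hb2b1, neg_neg]
  have hZQ : (b2*b1)*(b2*Y) = 0 := by
    calc (b2*b1)*(b2*Y) = b2*((b1*b2)*Y) := by noncomm_ring
      _ = b2*((-(b2*b1))*Y) := by rw [hb1b2]
      _ = -((b2*b2)*(b1*Y)) := by noncomm_ring
      _ = 0 := by rw [sqb2]; simp
  have hZZ : (b2*b1)*(b2*b1) = 0 := by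
    calc (b2*b1)*(b2*b1) = b2*((b1*b2)*b1) := by noncomm_ring
      _ = b2*((-(b2*b1))*b1) := by rw [hb1b2]
      _ = -((b2*b2)*(b1*b1)) := by noncomm_ring
      _ = 0 := by rw [sqb2]; simp
  have hΨsq : (b1*X + b2*Y + mu • (b2*b1))^2 = (-2 : F) • (b1*(b2*(X*Y))) := by
    have expand : (b1*X + b2*Y + mu • (b2*b1))^2
        = (b1*X)*(b1*X) + (b1*X)*(b2*Y) + mu • ((b1*X)*(b2*b1))
        + (b2*Y)*(b1*X) + (b2*Y)*(b2*Y) + mu • ((b2*Y)*(b2*b1))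
        + mu • ((b2*b1)*(b1*X)) + mu • ((b2*b1)*(b2*Y)) + (mu*mu) • ((b2*b1)*(b2*b1)) := by
      rw [pow_two]
      simp only [add_mul, mul_add, smul_mul_assoc, mul_smul_comm, smul_smul, smul_add]
      abel
    rw [expand, hPP, hPQ, hQP, hQQ, hPZ, hZP, hQZ, hZQ, hZZ]
    module
  have hΨ : PhiT ζ e 0 1 0 1 2 3 + mu • (b2 * b1) = b1*X + b2*Y + mu • (b2*b1) := by
    rw [PhiT, hXdef, hYdef]
  have hexp : expT F 3 (PhiT ζ e 0 1 0 1 2 3 + mu • (b2 * b1))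
      = (1 + b2*Y) + ((-X) + ((mu • b2) + b2*(X*Y)))*b1 := by
    rw [hΨ]
    have h3 : expT F 3 (b1*X + b2*Y + mu • (b2*b1))
        = 1 + (b1*X + b2*Y + mu • (b2*b1)) + (2:F)⁻¹ • (b1*X + b2*Y + mu • (b2*b1))^2 := by
      simp [expT, Finset.sum_range_succ, Nat.factorial]
    have hW2 : (2:F)⁻¹ • (b1*X + b2*Y + mu • (b2*b1))^2 = -(b1*(b2*(X*Y))) := by
      rw [hΨsq, smul_smul]
      have h2 : (2:F)⁻¹ * (-2) = -1 := by field_simp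
      rw [h2]; module
    rw [h3, hW2]
    have e1 : b1 * X = (-X) * b1 := by rw [neg_mul, hXb1, neg_neg]
    have e2 : mu • (b2*b1) = (mu • b2) * b1 := by rw [smul_mul_assoc]
    have e3 : (b2*(X*Y))*b1 = -(b1*(b2*(X*Y))) := by
      calc (b2*(X*Y))*b1 = b2*(X*(Y*b1)) := by noncomm_ring
        _ = b2*(X*(-(b1*Y))) := by rw [hYb1]
        _ = -(b2*((X*b1)*Y)) := by noncomm_ring
        _ = -(b2*((-(b1*X))*Y)) := by rw [hXb1]
        _ = (b2*b1)*(X*Y) := by noncomm_ring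
        _ = (-(b1*b2))*(X*Y) := by rw [hb2b1]
        _ = -(b1*(b2*(X*Y))) := by noncomm_ring
    rw [e1, e2, ← e3]
    simp only [add_mul]
    abel
  -- memberships
  have mem0 : ∀ j, j ≠ (Sum.inr 0 : Finset (Fin 5) ⊕ Fin 2) → e j ∈ notInvolving F e (Sum.inr 0) :=
    fun j hj => Algebra.subset_adjoin ⟨j, hj, rfl⟩
  have mem1 : ∀ j, j ≠ (Sum.inr 1 : Finset (Fin 5) ⊕ Fin 2) → e j ∈ notInvolving F e (Sum.inr 1) :=
    fun j hj => Algebra.subset_adjoin ⟨j, hj, rfl⟩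
  have mg10 : g1 ∈ notInvolving F e (Sum.inr 0) := mem0 _ (by simp)
  have mg20 : g2 ∈ notInvolving F e (Sum.inr 0) := mem0 _ (by simp)
  have mg30 : g3 ∈ notInvolving F e (Sum.inr 0) := mem0 _ (by simp)
  have mg40 : g4 ∈ notInvolving F e (Sum.inr 0) := mem0 _ (by simp)
  have mb20 : b2 ∈ notInvolving F e (Sum.inr 0) := mem0 _ (by simp)
  have mg11 : g1 ∈ notInvolving F e (Sum.inr 1) := mem1 _ (by simp)
  have mg21 : g2 ∈ notInvolving F e (Sum.inr 1) := mem1 _ (by simp)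
  have mg31 : g3 ∈ notInvolving F e (Sum.inr 1) := mem1 _ (by simp)
  have mg41 : g4 ∈ notInvolving F e (Sum.inr 1) := mem1 _ (by simp)
  have mX0 : X ∈ notInvolving F e (Sum.inr 0) := by
    rw [hXdef]
    exact add_mem (sub_mem (Subalgebra.smul_mem _ mg10 _) (Subalgebra.smul_mem _ mg20 _))
      (Subalgebra.smul_mem _ mg30 _)
  have mY0 : Y ∈ notInvolving F e (Sum.inr 0) := by
    rw [hYdef]
    exact add_mem (sub_mem (Subalgebra.smul_mem _ mg10 _) (Subalgebra.smul_mem _ mg20 _)) mg40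
  have mX1 : X ∈ notInvolving F e (Sum.inr 1) := by
    rw [hXdef]
    exact add_mem (sub_mem (Subalgebra.smul_mem _ mg11 _) (Subalgebra.smul_mem _ mg21 _))
      (Subalgebra.smul_mem _ mg31 _)
  have mY1 : Y ∈ notInvolving F e (Sum.inr 1) := by
    rw [hYdef]
    exact add_mem (sub_mem (Subalgebra.smul_mem _ mg11 _) (Subalgebra.smul_mem _ mg21 _)) mg41
  -- first Berezin integral
  have memA : (1 + b2*Y) ∈ notInvolving F e (Sum.inr 0) :=
    add_mem (one_mem _) (mul_mem mb20 mY0)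
  have memB : ((-X) + ((mu • b2) + b2*(X*Y))) ∈ notInvolving F e (Sum.inr 0) :=
    add_mem (neg_mem mX0)
      (add_mem (Subalgebra.smul_mem _ mb20 _) (mul_mem mb20 (mul_mem mX0 mY0)))
  have step1 : B1 (expT F 3 (PhiT ζ e 0 1 0 1 2 3 + mu • (b2 * b1)))
      = (-X) + ((mu • b2) + b2*(X*Y)) := by
    rw [hexp, hb1def, map_add, hB1.1 _ memA, hB1.2 _ memB, zero_add]
  -- rearrange for the second integral
  have e4 : b2*(X*Y) = (X*Y)*b2 := by
    calc b2*(X*Y) = -((-(b2*X))*Y) := by noncomm_ring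
      _ = -((X*b2)*Y) := by rw [hXb2]
      _ = -(X*(b2*Y)) := by noncomm_ring
      _ = -(X*(-(Y*b2))) := by rw [hYb2]; noncomm_ring
      _ = (X*Y)*b2 := by noncomm_ring
  have regroup : (-X) + ((mu • b2) + b2*(X*Y)) = (-X) + ((mu • (1:Λ)) + X*Y)*b2 := by
    have expand2 : ((mu • (1:Λ)) + X*Y)*b2 = mu • b2 + (X*Y)*b2 := by
      simp only [add_mul, smul_mul_assoc, one_mul]
    rw [e4, expand2]
  have memC : (-X : Λ) ∈ notInvolving F e (Sum.inr 1) := neg_mem mX1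
  have memD : ((mu • (1:Λ)) + X*Y) ∈ notInvolving F e (Sum.inr 1) :=
    add_mem (Subalgebra.smul_mem _ (one_mem _) _) (mul_mem mX1 mY1)
  have step2 : B2 ((-X) + ((mu • b2) + b2*(X*Y))) = (mu • (1:Λ)) + X*Y := by
    rw [regroup, hb2def, map_add, hB2.1 _ memC, hB2.2 _ memD, zero_add]
  -- the quadratic identity X*Y = fw
  have hz : ζ 2 - ζ 3 ≠ 0 := sub_ne_zero_of_ne h34
  have hXY : X * Y = fw ζ (fun S => e (Sum.inl S)) 0 1 2 3 := by
    rw [hXdef, hYdef, fw]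
    rw [← hg1def, ← hg2def, ← hg3def, ← hg4def]
    simp only [sub_mul, add_mul, mul_sub, mul_add, smul_mul_assoc, mul_smul_comm,
      smul_smul, a21, a31, a32, sq1, sq2, smul_zero, smul_neg, smul_add, smul_sub]
    match_scalars <;> field_simp <;> ring
  rw [step1, step2, hXY]
  simp only [hw, one_mul]
  abel
end

section
/- Assume ζ_3 ≠ ζ_4 and ζ_3 ≠ ζ_5. Then the left-hand side integrand of the pentagon equation is a single Gaussian exponential: ∫∫∫∫ exp(Φ_{1234} + Φ_{1235}) db^{(1)}_{1234} db^{(2)}_{1234} db^{(1)}_{1235} db^{(2)}_{1235} = f_{1234} · f_{1235} (integration innermost over b^{(1)}_{1234}, then b^{(2)}_{1234}, then b^{(1)}_{1235}, then b^{(2)}_{1235}). -/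
def ACm {Λ : Type*} [Ring Λ] (q x : Λ) : Prop := q * x = -(x * q)

namespace ACm
variable {F : Type*} [Field F] {Λ : Type*} [Ring Λ] [Algebra F Λ] {q x y : Λ}

theorem symm (h : ACm q x) : ACm x q := by unfold ACm at *; rw [h, neg_neg]
theorem flip (h : ACm q x) : x * q = -(q * x) := by rw [h, neg_neg]
theorem add (hx : ACm q x) (hy : ACm q y) : ACm q (x + y) := by
  unfold ACm at *; rw [mul_add, add_mul, hx, hy]; abel
theorem smul (hx : ACm q x) (r : F) : ACm q (r • x) := by
  unfold ACm at *; rw [mul_smul_comm, smul_mul_assoc, hx, smul_neg]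
theorem sub (hx : ACm q x) (hy : ACm q y) : ACm q (x - y) := by
  unfold ACm at *; rw [mul_sub, sub_mul, hx, hy]; abel
theorem mul_ac (hx : ACm q x) (hy : ACm q y) : Commute q (x * y) := by
  unfold ACm at *; unfold Commute SemiconjBy
  rw [← mul_assoc, hx, neg_mul, mul_assoc, hy, mul_neg, neg_neg, mul_assoc]
theorem mul_cc (hx : ACm q x) (hy : Commute q y) : ACm q (x * y) := by
  unfold ACm at *
  rw [← mul_assoc, hx, neg_mul, mul_assoc, hy.eq, mul_assoc]
end ACm

theorem sq_zero_of {Λ : Type*} [Ring Λ] {q x : Λ} (hq : q * q = 0) (h : ACm q x) :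
    (q * x) * (q * x) = 0 := by
  rw [mul_assoc, ← mul_assoc x q x, h.flip, neg_mul, mul_neg, ← mul_assoc, ← mul_assoc, hq,
    zero_mul, zero_mul, neg_zero]

theorem span_ac {F : Type*} [Field F] {Λ : Type*} [Ring Λ] [Algebra F Λ] {ι : Type*}
    (e : ι → Λ) (hanti : ∀ i j, e i * e j = -(e j * e i)) :
    ∀ x ∈ Submodule.span F (Set.range e), ∀ y ∈ Submodule.span F (Set.range e), ACm x y := by
  intro x hx
  induction hx using Submodule.span_induction with
  | mem x hx =>
    intro y hy
    induction hy using Submodule.span_induction with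
    | mem y hy =>
      obtain ⟨i, rfl⟩ := hx; obtain ⟨j, rfl⟩ := hy; exact hanti i j
    | zero => unfold ACm; simp
    | add a b _ _ ha hb => exact ha.add hb
    | smul r a _ ha => exact ha.smul r
  | zero => intro y hy; unfold ACm; simp
  | add a b _ _ ha hb => intro y hy; exact ((ha y hy).symm.add (hb y hy).symm).symm
  | smul r a _ ha => intro y hy; exact (((ha y hy).symm.smul r)).symm

theorem mem_notInvolving {F : Type*} [Field F] {Λ : Type*} [Ring Λ] [Algebra F Λ]
    {ι : Type*} (e : ι → Λ) {j i : ι} (h : j ≠ i) : e j ∈ notInvolving F e i :=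
  Algebra.subset_adjoin ⟨j, h, rfl⟩

theorem key {F : Type*} [Field F] {Λ : Type*} [Ring Λ] [Algebra F Λ] {ι : Type*}
    (e : ι → Λ) (hanti : ∀ i j, e i * e j = -(e j * e i)) (hsq : ∀ i, e i * e i = 0)
    (h2 : (2 : F) ≠ 0) (h6 : (6 : F) ≠ 0) (h24 : (24 : F) ≠ 0)
    (i1 i2 i3 i4 : ι)
    (n12 : i1 ≠ i2) (n13 : i1 ≠ i3) (n14 : i1 ≠ i4)
    (n23 : i2 ≠ i3) (n24 : i2 ≠ i4) (n34 : i3 ≠ i4)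
    (c1 c2 c3 c4 : Λ)
    (hs1 : c1 ∈ Submodule.span F (Set.range e))
    (hs2 : c2 ∈ Submodule.span F (Set.range e))
    (hs3 : c3 ∈ Submodule.span F (Set.range e))
    (hs4 : c4 ∈ Submodule.span F (Set.range e))
    (hc1N : ∀ m, m = i1 ∨ m = i2 ∨ m = i3 ∨ m = i4 → c1 ∈ notInvolving F e m)
    (hc2N : ∀ m, m = i1 ∨ m = i2 ∨ m = i3 ∨ m = i4 → c2 ∈ notInvolving F e m)
    (hc3N : ∀ m, m = i1 ∨ m = i2 ∨ m = i3 ∨ m = i4 → c3 ∈ notInvolving F e m)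
    (hc4N : ∀ m, m = i1 ∨ m = i2 ∨ m = i3 ∨ m = i4 → c4 ∈ notInvolving F e m)
    (B1 B2 B3 B4 : Λ →ₗ[F] Λ)
    (hB1 : IsBerezin F e i1 B1) (hB2 : IsBerezin F e i2 B2)
    (hB3 : IsBerezin F e i3 B3) (hB4 : IsBerezin F e i4 B4) :
    B4 (B3 (B2 (B1 (expT F 5 ((e i1 * c1 + e i2 * c2) + (e i3 * c3 + e i4 * c4)))))) =
      (c1 * c2) * (c3 * c4) := by
  have ac := span_ac (F := F) e hanti
  have sp1 : e i1 ∈ Submodule.span F (Set.range e) := Submodule.subset_span ⟨i1, rfl⟩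
  have sp2 : e i2 ∈ Submodule.span F (Set.range e) := Submodule.subset_span ⟨i2, rfl⟩
  have sp3 : e i3 ∈ Submodule.span F (Set.range e) := Submodule.subset_span ⟨i3, rfl⟩
  have sp4 : e i4 ∈ Submodule.span F (Set.range e) := Submodule.subset_span ⟨i4, rfl⟩
  set t1 : Λ := e i1 * c1 with ht1
  set t2 : Λ := e i2 * c2 with ht2
  set t3 : Λ := e i3 * c3 with ht3
  set t4 : Λ := e i4 * c4 with ht4
  set X : Λ := (t1 + t2) + (t3 + t4) with hX
  set r3 : Λ := 1 + t4 with hr3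
  set r2 : Λ := r3 + t3 * r3 with hr2
  set r1 : Λ := r2 + t2 * r2 with hr1
  -- commutation of the t's
  have ct12 : Commute t1 t2 :=
    Commute.mul_left ((ac _ sp1 _ sp2).mul_ac (ac _ sp1 _ hs2))
      ((ac _ hs1 _ sp2).mul_ac (ac _ hs1 _ hs2))
  have ct13 : Commute t1 t3 :=
    Commute.mul_left ((ac _ sp1 _ sp3).mul_ac (ac _ sp1 _ hs3))
      ((ac _ hs1 _ sp3).mul_ac (ac _ hs1 _ hs3))
  have ct14 : Commute t1 t4 :=
    Commute.mul_left ((ac _ sp1 _ sp4).mul_ac (ac _ sp1 _ hs4))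
      ((ac _ hs1 _ sp4).mul_ac (ac _ hs1 _ hs4))
  have ct23 : Commute t2 t3 :=
    Commute.mul_left ((ac _ sp2 _ sp3).mul_ac (ac _ sp2 _ hs3))
      ((ac _ hs2 _ sp3).mul_ac (ac _ hs2 _ hs3))
  have ct24 : Commute t2 t4 :=
    Commute.mul_left ((ac _ sp2 _ sp4).mul_ac (ac _ sp2 _ hs4))
      ((ac _ hs2 _ sp4).mul_ac (ac _ hs2 _ hs4))
  have ct34 : Commute t3 t4 :=
    Commute.mul_left ((ac _ sp3 _ sp4).mul_ac (ac _ sp3 _ hs4))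
      ((ac _ hs3 _ sp4).mul_ac (ac _ hs3 _ hs4))
  have st1 : t1 * t1 = 0 := sq_zero_of (hsq i1) (ac _ sp1 _ hs1)
  have st2 : t2 * t2 = 0 := sq_zero_of (hsq i2) (ac _ sp2 _ hs2)
  have st3 : t3 * t3 = 0 := sq_zero_of (hsq i3) (ac _ sp3 _ hs3)
  have st4 : t4 * t4 = 0 := sq_zero_of (hsq i4) (ac _ sp4 _ hs4)
  have o21 : t2 * t1 = t1 * t2 := ct12.eq.symm
  have o31 : t3 * t1 = t1 * t3 := ct13.eq.symm
  have o41 : t4 * t1 = t1 * t4 := ct14.eq.symm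
  have o32 : t3 * t2 = t2 * t3 := ct23.eq.symm
  have o42 : t4 * t2 = t2 * t4 := ct24.eq.symm
  have o43 : t4 * t3 = t3 * t4 := ct34.eq.symm
  have o21' : ∀ z : Λ, t2 * (t1 * z) = t1 * (t2 * z) := fun z => by
    rw [← mul_assoc, o21, mul_assoc]
  have o31' : ∀ z : Λ, t3 * (t1 * z) = t1 * (t3 * z) := fun z => by
    rw [← mul_assoc, o31, mul_assoc]
  have o41' : ∀ z : Λ, t4 * (t1 * z) = t1 * (t4 * z) := fun z => by
    rw [← mul_assoc, o41, mul_assoc]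
  have o32' : ∀ z : Λ, t3 * (t2 * z) = t2 * (t3 * z) := fun z => by
    rw [← mul_assoc, o32, mul_assoc]
  have o42' : ∀ z : Λ, t4 * (t2 * z) = t2 * (t4 * z) := fun z => by
    rw [← mul_assoc, o42, mul_assoc]
  have o43' : ∀ z : Λ, t4 * (t3 * z) = t3 * (t4 * z) := fun z => by
    rw [← mul_assoc, o43, mul_assoc]
  have st1' : ∀ z : Λ, t1 * (t1 * z) = 0 := fun z => by rw [← mul_assoc, st1, zero_mul]
  have st2' : ∀ z : Λ, t2 * (t2 * z) = 0 := fun z => by rw [← mul_assoc, st2, zero_mul]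
  have st3' : ∀ z : Λ, t3 * (t3 * z) = 0 := fun z => by rw [← mul_assoc, st3, zero_mul]
  have st4' : ∀ z : Λ, t4 * (t4 * z) = 0 := fun z => by rw [← mul_assoc, st4, zero_mul]
  -- powers of X
  have p2 : X ^ 2 = (2 : F) • (t1 * t2 + t1 * t3 + t1 * t4 + t2 * t3 + t2 * t4 + t3 * t4) := by
    rw [pow_two, hX]
    simp only [mul_add, add_mul, st1, st2, st3, st4, o21, o31, o41, o32, o42, o43,
      add_zero, zero_add]
    module
  have p3 : X ^ 3 = (6 : F) •
      (t1 * (t2 * t3) + t1 * (t2 * t4) + t1 * (t3 * t4) + t2 * (t3 * t4)) := by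
    rw [pow_succ, p2, smul_mul_assoc, hX]
    simp only [mul_add, add_mul, mul_assoc, o21', o31', o41', o32', o42', o43',
      o21, o31, o41, o32, o42, o43, st1', st2', st3', st4', st1, st2, st3, st4,
      mul_zero, zero_mul, add_zero, zero_add]
    module
  have p4 : X ^ 4 = (24 : F) • (t1 * (t2 * (t3 * t4))) := by
    rw [pow_succ, p3, smul_mul_assoc, hX]
    simp only [mul_add, add_mul, mul_assoc, o21', o31', o41', o32', o42', o43',
      o21, o31, o41, o32, o42, o43, st1', st2', st3', st4', st1, st2, st3, st4,
      mul_zero, zero_mul, add_zero, zero_add]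
    module
  -- the exponential
  have hexp : expT F 5 X = r1 + (-(c1 * r1)) * e i1 := by
    have k2 : ((Nat.factorial 2 : ℕ) : F)⁻¹ * 2 = 1 := by
      rw [show ((Nat.factorial 2 : ℕ) : F) = 2 by norm_num [Nat.factorial]]
      exact inv_mul_cancel₀ h2
    have k3 : ((Nat.factorial 3 : ℕ) : F)⁻¹ * 6 = 1 := by
      rw [show ((Nat.factorial 3 : ℕ) : F) = 6 by norm_num [Nat.factorial]]
      exact inv_mul_cancel₀ h6
    have k4 : ((Nat.factorial 4 : ℕ) : F)⁻¹ * 24 = 1 := by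
      rw [show ((Nat.factorial 4 : ℕ) : F) = 24 by norm_num [Nat.factorial]]
      exact inv_mul_cancel₀ h24
    have step : expT F 5 X = 1 + X +
        (t1 * t2 + t1 * t3 + t1 * t4 + t2 * t3 + t2 * t4 + t3 * t4) +
        (t1 * (t2 * t3) + t1 * (t2 * t4) + t1 * (t3 * t4) + t2 * (t3 * t4)) +
        t1 * (t2 * (t3 * t4)) := by
      rw [expT]
      rw [Finset.sum_range_succ, Finset.sum_range_succ, Finset.sum_range_succ,
        Finset.sum_range_succ, Finset.sum_range_succ, Finset.sum_range_zero]
      rw [pow_zero, pow_one, p2, p3, p4, smul_smul, smul_smul, smul_smul, k2, k3, k4,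
        one_smul, one_smul, one_smul]
      norm_num [Nat.factorial]
    rw [step]
    have hflip : c1 * r1 * e i1 = -(e i1 * (c1 * r1)) :=
      ((ac _ sp1 _ hs1).mul_cc (by
        have cb1t4 : Commute (e i1) t4 := (ac _ sp1 _ sp4).mul_ac (ac _ sp1 _ hs4)
        have cb1t3 : Commute (e i1) t3 := (ac _ sp1 _ sp3).mul_ac (ac _ sp1 _ hs3)
        have cb1t2 : Commute (e i1) t2 := (ac _ sp1 _ sp2).mul_ac (ac _ sp1 _ hs2)
        have cb1r3 : Commute (e i1) r3 := (Commute.one_right _).add_right cb1t4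
        have cb1r2 : Commute (e i1) r2 := cb1r3.add_right (cb1t3.mul_right cb1r3)
        exact cb1r2.add_right (cb1t2.mul_right cb1r2))).flip
    rw [neg_mul, hflip, neg_neg, ← mul_assoc (e i1) c1 r1, ← ht1, hX, hr1, hr2, hr3]
    noncomm_ring

  -- memberships
  have ht2N1 : t2 ∈ notInvolving F e i1 :=
    Subalgebra.mul_mem _ (mem_notInvolving e n12.symm) (hc2N i1 (Or.inl rfl))
  have ht3N1 : t3 ∈ notInvolving F e i1 :=
    Subalgebra.mul_mem _ (mem_notInvolving e n13.symm) (hc3N i1 (Or.inl rfl))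
  have ht4N1 : t4 ∈ notInvolving F e i1 :=
    Subalgebra.mul_mem _ (mem_notInvolving e n14.symm) (hc4N i1 (Or.inl rfl))
  have hr3N1 : r3 ∈ notInvolving F e i1 :=
    Subalgebra.add_mem _ (Subalgebra.one_mem _) ht4N1
  have hr2N1 : r2 ∈ notInvolving F e i1 :=
    Subalgebra.add_mem _ hr3N1 (Subalgebra.mul_mem _ ht3N1 hr3N1)
  have hr1N1 : r1 ∈ notInvolving F e i1 :=
    Subalgebra.add_mem _ hr2N1 (Subalgebra.mul_mem _ ht2N1 hr2N1)
  have hh1N1 : -(c1 * r1) ∈ notInvolving F e i1 :=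
    Subalgebra.neg_mem _ (Subalgebra.mul_mem _ (hc1N i1 (Or.inl rfl)) hr1N1)
  have s1 : B1 (expT F 5 X) = -(c1 * r1) := by
    rw [hexp, map_add, hB1.1 r1 hr1N1, hB1.2 _ hh1N1, zero_add]
  -- step 2
  have cb2r3 : Commute (e i2) r3 :=
    (Commute.one_right _).add_right ((ac _ sp2 _ sp4).mul_ac (ac _ sp2 _ hs4))
  have cb2r2 : Commute (e i2) r2 :=
    cb2r3.add_right (((ac _ sp2 _ sp3).mul_ac (ac _ sp2 _ hs3)).mul_right cb2r3)
  have cW2 : Commute (e i2) (c1 * (c2 * r2)) :=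
    (ac _ sp2 _ hs1).mul_ac ((ac _ sp2 _ hs2).mul_cc cb2r2)
  have key2 : c1 * (t2 * r2) = -((c1 * (c2 * r2)) * e i2) := by
    rw [ht2, mul_assoc (e i2) c2 r2, ← mul_assoc c1 (e i2) (c2 * r2), ac _ hs1 _ sp2,
      neg_mul, mul_assoc, cW2.eq]
  have split2 : -(c1 * r1) = -(c1 * r2) + (c1 * (c2 * r2)) * e i2 := by
    rw [hr1, mul_add, key2]; abel
  have ht3N2 : t3 ∈ notInvolving F e i2 :=
    Subalgebra.mul_mem _ (mem_notInvolving e n23.symm) (hc3N i2 (Or.inr (Or.inl rfl)))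
  have ht4N2 : t4 ∈ notInvolving F e i2 :=
    Subalgebra.mul_mem _ (mem_notInvolving e n24.symm) (hc4N i2 (Or.inr (Or.inl rfl)))
  have hr3N2 : r3 ∈ notInvolving F e i2 :=
    Subalgebra.add_mem _ (Subalgebra.one_mem _) ht4N2
  have hr2N2 : r2 ∈ notInvolving F e i2 :=
    Subalgebra.add_mem _ hr3N2 (Subalgebra.mul_mem _ ht3N2 hr3N2)
  have hg2N2 : -(c1 * r2) ∈ notInvolving F e i2 :=
    Subalgebra.neg_mem _ (Subalgebra.mul_mem _ (hc1N i2 (Or.inr (Or.inl rfl))) hr2N2)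
  have hW2N2 : c1 * (c2 * r2) ∈ notInvolving F e i2 :=
    Subalgebra.mul_mem _ (hc1N i2 (Or.inr (Or.inl rfl)))
      (Subalgebra.mul_mem _ (hc2N i2 (Or.inr (Or.inl rfl))) hr2N2)
  have s2 : B2 (-(c1 * r1)) = c1 * (c2 * r2) := by
    rw [split2, map_add, hB2.1 _ hg2N2, hB2.2 _ hW2N2, zero_add]
  -- step 3
  have cb3r3 : Commute (e i3) r3 :=
    (Commute.one_right _).add_right ((ac _ sp3 _ sp4).mul_ac (ac _ sp3 _ hs4))
  have acV : ACm (e i3) (c1 * (c2 * (c3 * r3))) :=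
    (ac _ sp3 _ hs1).mul_cc ((ac _ sp3 _ hs2).mul_ac ((ac _ sp3 _ hs3).mul_cc cb3r3))
  have key3 : c1 * (c2 * (t3 * r3)) = (-(c1 * (c2 * (c3 * r3)))) * e i3 := by
    rw [ht3, mul_assoc (e i3) c3 r3, ← mul_assoc c2 (e i3) (c3 * r3), ac _ hs2 _ sp3,
      neg_mul, mul_neg, mul_assoc (e i3) c2 (c3 * r3),
      ← mul_assoc c1 (e i3) (c2 * (c3 * r3)), ac _ hs1 _ sp3, neg_mul, neg_neg,
      mul_assoc (e i3), acV, ← neg_mul]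
  have split3 : c1 * (c2 * r2) = c1 * (c2 * r3) + (-(c1 * (c2 * (c3 * r3)))) * e i3 := by
    rw [hr2, mul_add, mul_add, key3]
  have ht4N3 : t4 ∈ notInvolving F e i3 :=
    Subalgebra.mul_mem _ (mem_notInvolving e n34.symm) (hc4N i3 (Or.inr (Or.inr (Or.inl rfl))))
  have hr3N3 : r3 ∈ notInvolving F e i3 :=
    Subalgebra.add_mem _ (Subalgebra.one_mem _) ht4N3
  have hg3N3 : c1 * (c2 * r3) ∈ notInvolving F e i3 :=
    Subalgebra.mul_mem _ (hc1N i3 (Or.inr (Or.inr (Or.inl rfl))))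
      (Subalgebra.mul_mem _ (hc2N i3 (Or.inr (Or.inr (Or.inl rfl)))) hr3N3)
  have hVN3 : -(c1 * (c2 * (c3 * r3))) ∈ notInvolving F e i3 :=
    Subalgebra.neg_mem _ (Subalgebra.mul_mem _ (hc1N i3 (Or.inr (Or.inr (Or.inl rfl))))
      (Subalgebra.mul_mem _ (hc2N i3 (Or.inr (Or.inr (Or.inl rfl))))
        (Subalgebra.mul_mem _ (hc3N i3 (Or.inr (Or.inr (Or.inl rfl)))) hr3N3)))
  have s3 : B3 (c1 * (c2 * r2)) = -(c1 * (c2 * (c3 * r3))) := by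
    rw [split3, map_add, hB3.1 _ hg3N3, hB3.2 _ hVN3, zero_add]
  -- step 4
  have cU : Commute (e i4) (c1 * (c2 * (c3 * c4))) :=
    (ac _ sp4 _ hs1).mul_ac ((ac _ sp4 _ hs2).mul_cc ((ac _ sp4 _ hs3).mul_ac (ac _ sp4 _ hs4)))
  have key4 : c1 * (c2 * (c3 * t4)) = -((c1 * (c2 * (c3 * c4))) * e i4) := by
    rw [ht4, ← mul_assoc c3 (e i4) c4, ac _ hs3 _ sp4, neg_mul, mul_neg, mul_neg,
      mul_assoc (e i4) c3 c4, ← mul_assoc c2 (e i4) (c3 * c4), ac _ hs2 _ sp4,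
      neg_mul, mul_neg, neg_neg, mul_assoc (e i4) c2 (c3 * c4),
      ← mul_assoc c1 (e i4) (c2 * (c3 * c4)), ac _ hs1 _ sp4, neg_mul,
      mul_assoc (e i4), cU.eq]
  have split4 : -(c1 * (c2 * (c3 * r3))) = -(c1 * (c2 * c3)) + (c1 * (c2 * (c3 * c4))) * e i4 := by
    rw [hr3, mul_add c3, mul_one, mul_add c2, mul_add c1, key4]; abel
  have hg4N4 : -(c1 * (c2 * c3)) ∈ notInvolving F e i4 :=
    Subalgebra.neg_mem _ (Subalgebra.mul_mem _ (hc1N i4 (Or.inr (Or.inr (Or.inr rfl))))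
      (Subalgebra.mul_mem _ (hc2N i4 (Or.inr (Or.inr (Or.inr rfl))))
        (hc3N i4 (Or.inr (Or.inr (Or.inr rfl))))))
  have hUN4 : c1 * (c2 * (c3 * c4)) ∈ notInvolving F e i4 :=
    Subalgebra.mul_mem _ (hc1N i4 (Or.inr (Or.inr (Or.inr rfl))))
      (Subalgebra.mul_mem _ (hc2N i4 (Or.inr (Or.inr (Or.inr rfl))))
        (Subalgebra.mul_mem _ (hc3N i4 (Or.inr (Or.inr (Or.inr rfl))))
          (hc4N i4 (Or.inr (Or.inr (Or.inr rfl))))))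
  have s4 : B4 (-(c1 * (c2 * (c3 * r3)))) = c1 * (c2 * (c3 * c4)) := by
    rw [split4, map_add, hB4.1 _ hg4N4, hB4.2 _ hUN4, zero_add]
  rw [s1, s2, s3, s4, ← mul_assoc]

/-- The left-hand-side integrand of the pentagon equation as a single Gaussian
exponential: `∫∫∫∫ exp(Φ₁₂₃₄ + Φ₁₂₃₅) db⁽¹⁾₁₂₃₄ db⁽²⁾₁₂₃₄ db⁽¹⁾₁₂₃₅ db⁽²⁾₁₂₃₅
= f₁₂₃₄ · f₁₂₃₅` (innermost integration first).  Here `e (Sum.inr (t, k))` is the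
generator `b⁽ᵏ⁺¹⁾` of tetrahedron `1234` (for `t = 0`) resp. `1235` (for `t = 1`).
The exponential terminates: `(Φ₁₂₃₄ + Φ₁₂₃₅) ^ 5 = 0`; for its Taylor series the
factorials `n!`, `n < 5`, must be invertible in `F`. -/
theorem gaussian_lhs
    {F : Type*} [Field F] {Λ : Type*} [Ring Λ] [Algebra F Λ]
    (hchar : (2 : F) ≠ 0)
    (ζ : Fin 5 → F)
    (hfac : ∀ n < 5, (n.factorial : F) ≠ 0)
    (h34 : ζ 2 ≠ ζ 3) (h35 : ζ 2 ≠ ζ 4)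
    (e : Finset (Fin 5) ⊕ (Fin 2 × Fin 2) → Λ)
    (hanti : ∀ i j, e i * e j = -(e j * e i))
    (hsq : ∀ i, e i * e i = 0)
    (B00 B01 B10 B11 : Λ →ₗ[F] Λ)
    (hB00 : IsBerezin F e (Sum.inr (0, 0)) B00)
    (hB01 : IsBerezin F e (Sum.inr (0, 1)) B01)
    (hB10 : IsBerezin F e (Sum.inr (1, 0)) B10)
    (hB11 : IsBerezin F e (Sum.inr (1, 1)) B11) :
    B11 (B10 (B01 (B00 (expT F 5
        (PhiT ζ e (0, 0) (0, 1) 0 1 2 3 + PhiT ζ e (1, 0) (1, 1) 0 1 2 4))))) =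
      fw ζ (fun S => e (Sum.inl S)) 0 1 2 3 * fw ζ (fun S => e (Sum.inl S)) 0 1 2 4 := by
  have h2 : (2 : F) ≠ 0 := hchar
  have h6 : (6 : F) ≠ 0 := by
    have h := hfac 3 (by norm_num); simpa [Nat.factorial] using h
  have h24 : (24 : F) ≠ 0 := by
    have h := hfac 4 (by norm_num); simpa [Nat.factorial] using h
  have h34' : ζ 2 - ζ 3 ≠ 0 := sub_ne_zero.mpr h34
  have h35' : ζ 2 - ζ 4 ≠ 0 := sub_ne_zero.mpr h35
  set c1 : Λ := (ζ 1 - ζ 2) • e (Sum.inl {0, 1, 2}) - (ζ 1 - ζ 3) • e (Sum.inl {0, 1, 3})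
      + (ζ 2 - ζ 3) • e (Sum.inl {0, 2, 3}) with hc1
  set c2 : Λ := ((ζ 0 - ζ 2) / (ζ 2 - ζ 3)) • e (Sum.inl {0, 1, 2})
      - ((ζ 0 - ζ 3) / (ζ 2 - ζ 3)) • e (Sum.inl {0, 1, 3}) + e (Sum.inl {1, 2, 3}) with hc2
  set c3 : Λ := (ζ 1 - ζ 2) • e (Sum.inl {0, 1, 2}) - (ζ 1 - ζ 4) • e (Sum.inl {0, 1, 4})
      + (ζ 2 - ζ 4) • e (Sum.inl {0, 2, 4}) with hc3
  set c4 : Λ := ((ζ 0 - ζ 2) / (ζ 2 - ζ 4)) • e (Sum.inl {0, 1, 2})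
      - ((ζ 0 - ζ 4) / (ζ 2 - ζ 4)) • e (Sum.inl {0, 1, 4}) + e (Sum.inl {1, 2, 4}) with hc4
  have spA : ∀ S : Finset (Fin 5), e (Sum.inl S) ∈ Submodule.span F (Set.range e) :=
    fun S => Submodule.subset_span ⟨_, rfl⟩
  have hs1 : c1 ∈ Submodule.span F (Set.range e) := by
    rw [hc1]
    exact Submodule.add_mem _ (Submodule.sub_mem _ (Submodule.smul_mem _ _ (spA _))
      (Submodule.smul_mem _ _ (spA _))) (Submodule.smul_mem _ _ (spA _))
  have hs2 : c2 ∈ Submodule.span F (Set.range e) := by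
    rw [hc2]
    exact Submodule.add_mem _ (Submodule.sub_mem _ (Submodule.smul_mem _ _ (spA _))
      (Submodule.smul_mem _ _ (spA _))) (spA _)
  have hs3 : c3 ∈ Submodule.span F (Set.range e) := by
    rw [hc3]
    exact Submodule.add_mem _ (Submodule.sub_mem _ (Submodule.smul_mem _ _ (spA _))
      (Submodule.smul_mem _ _ (spA _))) (Submodule.smul_mem _ _ (spA _))
  have hs4 : c4 ∈ Submodule.span F (Set.range e) := by
    rw [hc4]
    exact Submodule.add_mem _ (Submodule.sub_mem _ (Submodule.smul_mem _ _ (spA _))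
      (Submodule.smul_mem _ _ (spA _))) (spA _)
  have memA : ∀ (S : Finset (Fin 5)) (k : Fin 2 × Fin 2),
      e (Sum.inl S) ∈ notInvolving F e (Sum.inr k) :=
    fun S k => Algebra.subset_adjoin ⟨_, by simp, rfl⟩
  have hc1N : ∀ m, m = (Sum.inr ((0 : Fin 2), (0 : Fin 2)) : Finset (Fin 5) ⊕ (Fin 2 × Fin 2))
      ∨ m = Sum.inr (0, 1) ∨ m = Sum.inr (1, 0) ∨ m = Sum.inr (1, 1) →
      c1 ∈ notInvolving F e m := by
    rintro m (rfl | rfl | rfl | rfl) <;> rw [hc1] <;>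
      exact Subalgebra.add_mem _ (Subalgebra.sub_mem _ (Subalgebra.smul_mem _ (memA _ _) _)
        (Subalgebra.smul_mem _ (memA _ _) _)) (Subalgebra.smul_mem _ (memA _ _) _)
  have hc2N : ∀ m, m = (Sum.inr ((0 : Fin 2), (0 : Fin 2)) : Finset (Fin 5) ⊕ (Fin 2 × Fin 2))
      ∨ m = Sum.inr (0, 1) ∨ m = Sum.inr (1, 0) ∨ m = Sum.inr (1, 1) →
      c2 ∈ notInvolving F e m := by
    rintro m (rfl | rfl | rfl | rfl) <;> rw [hc2] <;>
      exact Subalgebra.add_mem _ (Subalgebra.sub_mem _ (Subalgebra.smul_mem _ (memA _ _) _)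
        (Subalgebra.smul_mem _ (memA _ _) _)) (memA _ _)
  have hc3N : ∀ m, m = (Sum.inr ((0 : Fin 2), (0 : Fin 2)) : Finset (Fin 5) ⊕ (Fin 2 × Fin 2))
      ∨ m = Sum.inr (0, 1) ∨ m = Sum.inr (1, 0) ∨ m = Sum.inr (1, 1) →
      c3 ∈ notInvolving F e m := by
    rintro m (rfl | rfl | rfl | rfl) <;> rw [hc3] <;>
      exact Subalgebra.add_mem _ (Subalgebra.sub_mem _ (Subalgebra.smul_mem _ (memA _ _) _)
        (Subalgebra.smul_mem _ (memA _ _) _)) (Subalgebra.smul_mem _ (memA _ _) _)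
  have hc4N : ∀ m, m = (Sum.inr ((0 : Fin 2), (0 : Fin 2)) : Finset (Fin 5) ⊕ (Fin 2 × Fin 2))
      ∨ m = Sum.inr (0, 1) ∨ m = Sum.inr (1, 0) ∨ m = Sum.inr (1, 1) →
      c4 ∈ notInvolving F e m := by
    rintro m (rfl | rfl | rfl | rfl) <;> rw [hc4] <;>
      exact Subalgebra.add_mem _ (Subalgebra.sub_mem _ (Subalgebra.smul_mem _ (memA _ _) _)
        (Subalgebra.smul_mem _ (memA _ _) _)) (memA _ _)
  have hmain := key e hanti hsq h2 h6 h24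
    (Sum.inr (0, 0)) (Sum.inr (0, 1)) (Sum.inr (1, 0)) (Sum.inr (1, 1))
    (by decide) (by decide) (by decide) (by decide) (by decide) (by decide)
    c1 c2 c3 c4 hs1 hs2 hs3 hs4 hc1N hc2N hc3N hc4N
    B00 B01 B10 B11 hB00 hB01 hB10 hB11
  have harg : PhiT ζ e (0, 0) (0, 1) 0 1 2 3 + PhiT ζ e (1, 0) (1, 1) 0 1 2 4 =
      (e (Sum.inr (0, 0)) * c1 + e (Sum.inr (0, 1)) * c2)
        + (e (Sum.inr (1, 0)) * c3 + e (Sum.inr (1, 1)) * c4) := by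
    rw [hc1, hc2, hc3, hc4]; rfl
  have hfw1 : c1 * c2 = fw ζ (fun S => e (Sum.inl S)) 0 1 2 3 := by
    have hBA := hanti (Sum.inl ({0, 1, 3} : Finset (Fin 5))) (Sum.inl {0, 1, 2})
    have hCA := hanti (Sum.inl ({0, 2, 3} : Finset (Fin 5))) (Sum.inl {0, 1, 2})
    have hCB := hanti (Sum.inl ({0, 2, 3} : Finset (Fin 5))) (Sum.inl {0, 1, 3})
    have hAA := hsq (Sum.inl ({0, 1, 2} : Finset (Fin 5)))
    have hBB := hsq (Sum.inl ({0, 1, 3} : Finset (Fin 5)))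
    rw [hc1, hc2]
    simp only [fw, add_mul, mul_add, sub_mul, mul_sub, smul_mul_assoc, mul_smul_comm,
      smul_smul, hBA, hCA, hCB, hAA, hBB, smul_zero, smul_neg, mul_zero, zero_mul]
    match_scalars <;> field_simp <;> ring
  have hfw2 : c3 * c4 = fw ζ (fun S => e (Sum.inl S)) 0 1 2 4 := by
    have hBA := hanti (Sum.inl ({0, 1, 4} : Finset (Fin 5))) (Sum.inl {0, 1, 2})
    have hCA := hanti (Sum.inl ({0, 2, 4} : Finset (Fin 5))) (Sum.inl {0, 1, 2})
    have hCB := hanti (Sum.inl ({0, 2, 4} : Finset (Fin 5))) (Sum.inl {0, 1, 4})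
    have hAA := hsq (Sum.inl ({0, 1, 2} : Finset (Fin 5)))
    have hBB := hsq (Sum.inl ({0, 1, 4} : Finset (Fin 5)))
    rw [hc3, hc4]
    simp only [fw, add_mul, mul_add, sub_mul, mul_sub, smul_mul_assoc, mul_smul_comm,
      smul_smul, hBA, hCA, hCB, hAA, hBB, smul_zero, smul_neg, mul_zero, zero_mul]
    match_scalars <;> field_simp <;> ring
  rw [harg, hmain, hfw1, hfw2]
end

section
/- Assume ζ_4 ≠ ζ_5 and let λ ∈ F. Then both differences ∫ g_{1234} g_{1235} da_{123} − ∫ f_{1234} f_{1235} da_{123} and (1/ζ_{45})·(∭ g_{1245} g_{2345} g_{1345} da_{345} da_{245} da_{145} − ∭ f_{1245} f_{2345} f_{1345} da_{345} da_{245} da_{145}) are linear combinations of Grassmann monomials of degree exactly 5 in the generators a_S; in particular, the degree-3 parts of the two sides of the pentagon equation for the g's coincide with those for the f's. -/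
/-- The set of Grassmann monomials of degree exactly `d` in the face generators:
products of `d` distinct generators `a S` with `S` a 3-element subset. -/
def degMonomials {Λ : Type*} [Ring Λ]
    (a : Finset (Fin 5) → Λ) (d : ℕ) : Set Λ :=
  { x | ∃ l : List (Finset (Fin 5)),
      l.length = d ∧ l.Nodup ∧ (∀ S ∈ l, S.card = 3) ∧ x = (l.map a).prod }


section AuxGrass

variable {F : Type*} [Field F] {Λ : Type*} [Ring Λ] [Algebra F Λ]
variable (a : Finset (Fin 5) → Λ)
variable (hanti : ∀ S T, a S * a T = -(a T * a S)) (hsq : ∀ S, a S * a S = 0)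

include hanti hsq

theorem my_zero_of_mem (l : List (Finset (Fin 5))) (i : Finset (Fin 5)) (hi : i ∈ l) :
    a i * (l.map a).prod = 0 := by
  induction l with
  | nil => simp at hi
  | cons j t ih =>
    rcases List.mem_cons.mp hi with h | h
    · subst h
      simp only [List.map_cons, List.prod_cons, ← mul_assoc, hsq, zero_mul]
    · simp only [List.map_cons, List.prod_cons]
      rw [← mul_assoc, hanti i j, neg_mul, mul_assoc, ih h, mul_zero, neg_zero]

theorem my_prod_eq_zero (l : List (Finset (Fin 5))) (h : ¬ l.Nodup) :
    (l.map a).prod = 0 := by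
  induction l with
  | nil => simp at h
  | cons j t ih =>
    rw [List.nodup_cons] at h
    push_neg at h
    by_cases hj : j ∈ t
    · simp only [List.map_cons, List.prod_cons, my_zero_of_mem a hanti hsq t j hj]
    · simp only [List.map_cons, List.prod_cons, ih (h hj), mul_zero]

theorem my_prod_mem (d : ℕ) (l : List (Finset (Fin 5)))
    (h : l.Nodup → l.length = d ∧ ∀ S ∈ l, S.card = 3) :
    (l.map a).prod ∈ Submodule.span F (degMonomials a d) := by
  by_cases hl : l.Nodup
  · exact Submodule.subset_span ⟨l, (h hl).1, hl, (h hl).2, rfl⟩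
  · rw [my_prod_eq_zero a hanti hsq l hl]; exact zero_mem _

omit hsq in
theorem my_comm (l : List (Finset (Fin 5))) (i : Finset (Fin 5)) :
    a i * (l.map a).prod = ((-1 : F) ^ l.length) • ((l.map a).prod * a i) := by
  induction l with
  | nil => simp
  | cons j t ih =>
    simp only [List.map_cons, List.prod_cons, List.length_cons]
    rw [← mul_assoc, hanti i j, neg_mul, mul_assoc, ih, mul_smul_comm, pow_succ,
      mul_neg_one, neg_smul, mul_assoc]

omit hanti hsq in
theorem my_mem_notInvolving (i : Finset (Fin 5)) (l : List (Finset (Fin 5)))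
    (h : ∀ j ∈ l, j ≠ i) : (l.map a).prod ∈ notInvolving F a i := by
  induction l with
  | nil => simpa using one_mem _
  | cons j t ih =>
    simp only [List.map_cons, List.prod_cons]
    exact mul_mem (Algebra.subset_adjoin ⟨j, h j (by simp), rfl⟩)
      (ih fun x hx => h x (by simp [hx]))

theorem my_berezin_span (i : Finset (Fin 5)) (B : Λ →ₗ[F] Λ) (hB : IsBerezin F a i B)
    (d : ℕ) (x : Λ) (hx : x ∈ Submodule.span F (degMonomials a (d + 1))) :
    B x ∈ Submodule.span F (degMonomials a d) := by
  induction hx using Submodule.span_induction with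
  | mem x hxm =>
    obtain ⟨l, hlen, hnd, hcard, rfl⟩ := hxm
    by_cases hi : i ∈ l
    · obtain ⟨l₁, l₂, rfl⟩ := List.append_of_mem hi
      rw [List.nodup_middle, List.nodup_cons] at hnd
      have hprod : ((l₁ ++ i :: l₂).map a).prod
          = ((-1 : F) ^ l₂.length) • (((l₁ ++ l₂).map a).prod * a i) := by
        rw [List.map_append, List.prod_append, List.map_cons, List.prod_cons,
          my_comm (F := F) a hanti l₂ i, mul_smul_comm, List.map_append,
          List.prod_append, mul_assoc]
      rw [hprod, map_smul, hB.2 _ (my_mem_notInvolving a i (l₁ ++ l₂)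
        (fun j hj => fun hji => hnd.1 (hji ▸ hj)))]
      refine Submodule.smul_mem _ _ (Submodule.subset_span ⟨l₁ ++ l₂, ?_, hnd.2, ?_, rfl⟩)
      · simp only [List.length_append, List.length_cons] at hlen ⊢; omega
      · intro S hS
        exact hcard S (by rcases List.mem_append.mp hS with h | h <;> simp [h])
    · rw [hB.1 _ (my_mem_notInvolving a i l (fun j hj hji => hi (hji ▸ hj)))]
      exact zero_mem _
  | zero => rw [map_zero]; exact zero_mem _
  | add x y _ _ hx hy => rw [map_add]; exact add_mem hx hy
  | smul c x _ hx => rw [map_smul]; exact Submodule.smul_mem _ _ hx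

theorem my_mul_mem (d₁ d₂ : ℕ) (x y : Λ) (hx : x ∈ Submodule.span F (degMonomials a d₁))
    (hy : y ∈ Submodule.span F (degMonomials a d₂)) :
    x * y ∈ Submodule.span F (degMonomials a (d₁ + d₂)) := by
  induction hx using Submodule.span_induction with
  | mem x hxm =>
    induction hy using Submodule.span_induction with
    | mem y hym =>
      obtain ⟨l₁, hlen₁, -, hcard₁, rfl⟩ := hxm
      obtain ⟨l₂, hlen₂, -, hcard₂, rfl⟩ := hym
      rw [← List.prod_append, ← List.map_append]
      refine my_prod_mem a hanti hsq _ _ (fun _ => ⟨by simp [hlen₁, hlen₂], fun S hS => ?_⟩)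
      rcases List.mem_append.mp hS with h | h
      exacts [hcard₁ S h, hcard₂ S h]
    | zero => rw [mul_zero]; exact zero_mem _
    | add u v _ _ hu hv => rw [mul_add]; exact add_mem hu hv
    | smul c u _ hu => rw [mul_smul_comm]; exact Submodule.smul_mem _ _ hu
  | zero => rw [zero_mul]; exact zero_mem _
  | add u v _ _ hu hv => rw [add_mul]; exact add_mem hu hv
  | smul c u _ hu => rw [smul_mul_assoc]; exact Submodule.smul_mem _ _ hu

theorem my_mem2 (d : ℕ) (S1 S2 : Finset (Fin 5))
    (h : ([S1, S2] : List (Finset (Fin 5))).Nodup →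
      ([S1, S2] : List (Finset (Fin 5))).length = d ∧
      ∀ S ∈ ([S1, S2] : List (Finset (Fin 5))), S.card = 3) :
    a S1 * (a S2) ∈ Submodule.span F (degMonomials a d) := by
  simpa [mul_assoc] using my_prod_mem a hanti hsq d [S1, S2] h

theorem my_mem4 (d : ℕ) (S1 S2 S3 S4 : Finset (Fin 5))
    (h : ([S1, S2, S3, S4] : List (Finset (Fin 5))).Nodup →
      ([S1, S2, S3, S4] : List (Finset (Fin 5))).length = d ∧
      ∀ S ∈ ([S1, S2, S3, S4] : List (Finset (Fin 5))), S.card = 3) :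
    a S1 * (a S2 * (a S3 * (a S4))) ∈ Submodule.span F (degMonomials a d) := by
  simpa [mul_assoc] using my_prod_mem a hanti hsq d [S1, S2, S3, S4] h

theorem my_mem8 (d : ℕ) (S1 S2 S3 S4 S5 S6 S7 S8 : Finset (Fin 5))
    (h : ([S1, S2, S3, S4, S5, S6, S7, S8] : List (Finset (Fin 5))).Nodup →
      ([S1, S2, S3, S4, S5, S6, S7, S8] : List (Finset (Fin 5))).length = d ∧
      ∀ S ∈ ([S1, S2, S3, S4, S5, S6, S7, S8] : List (Finset (Fin 5))), S.card = 3) :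
    a S1 * (a S2 * (a S3 * (a S4 * (a S5 * (a S6 * (a S7 * (a S8))))))) ∈ Submodule.span F (degMonomials a d) := by
  simpa [mul_assoc] using my_prod_mem a hanti hsq d [S1, S2, S3, S4, S5, S6, S7, S8] h

theorem my_mem10 (d : ℕ) (S1 S2 S3 S4 S5 S6 S7 S8 S9 S10 : Finset (Fin 5))
    (h : ([S1, S2, S3, S4, S5, S6, S7, S8, S9, S10] : List (Finset (Fin 5))).Nodup →
      ([S1, S2, S3, S4, S5, S6, S7, S8, S9, S10] : List (Finset (Fin 5))).length = d ∧
      ∀ S ∈ ([S1, S2, S3, S4, S5, S6, S7, S8, S9, S10] : List (Finset (Fin 5))), S.card = 3) :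
    a S1 * (a S2 * (a S3 * (a S4 * (a S5 * (a S6 * (a S7 * (a S8 * (a S9 * (a S10))))))))) ∈ Submodule.span F (degMonomials a d) := by
  simpa [mul_assoc] using my_prod_mem a hanti hsq d [S1, S2, S3, S4, S5, S6, S7, S8, S9, S10] h

theorem my_mem12 (d : ℕ) (S1 S2 S3 S4 S5 S6 S7 S8 S9 S10 S11 S12 : Finset (Fin 5))
    (h : ([S1, S2, S3, S4, S5, S6, S7, S8, S9, S10, S11, S12] : List (Finset (Fin 5))).Nodup →
      ([S1, S2, S3, S4, S5, S6, S7, S8, S9, S10, S11, S12] : List (Finset (Fin 5))).length = d ∧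
      ∀ S ∈ ([S1, S2, S3, S4, S5, S6, S7, S8, S9, S10, S11, S12] : List (Finset (Fin 5))), S.card = 3) :
    a S1 * (a S2 * (a S3 * (a S4 * (a S5 * (a S6 * (a S7 * (a S8 * (a S9 * (a S10 * (a S11 * (a S12))))))))))) ∈ Submodule.span F (degMonomials a d) := by
  simpa [mul_assoc] using my_prod_mem a hanti hsq d [S1, S2, S3, S4, S5, S6, S7, S8, S9, S10, S11, S12] h

end AuxGrass

set_option maxRecDepth 100000 in
set_option maxHeartbeats 2000000 in
/-- The differences between the two sides of the pentagon equation for the `g`'s and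
for the `f`'s are linear combinations of Grassmann monomials of degree exactly 5;
in particular the degree-3 parts of the two sides for the `g`'s coincide with those
for the `f`'s. -/
theorem g_minus_f_degree_five
    {F : Type*} [Field F] {Λ : Type*} [Ring Λ] [Algebra F Λ]
    (hchar : (2 : F) ≠ 0)
    (ζ : Fin 5 → F)
    (h45 : ζ 3 ≠ ζ 4) (lam : F)
    (a : Finset (Fin 5) → Λ)
    (hanti : ∀ S T, a S * a T = -(a T * a S))
    (hsq : ∀ S, a S * a S = 0)
    (B123 B145 B245 B345 : Λ →ₗ[F] Λ)
    (hB123 : IsBerezin F a ({0, 1, 2} : Finset (Fin 5)) B123)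
    (hB145 : IsBerezin F a ({0, 3, 4} : Finset (Fin 5)) B145)
    (hB245 : IsBerezin F a ({1, 3, 4} : Finset (Fin 5)) B245)
    (hB345 : IsBerezin F a ({2, 3, 4} : Finset (Fin 5)) B345)
 :
    B123 (gw ζ a lam 1 0 1 2 3 * gw ζ a lam (-1) 0 1 2 4) -
        B123 (fw ζ a 0 1 2 3 * fw ζ a 0 1 2 4) ∈
      Submodule.span F (degMonomials a 5) ∧
    (ζ 3 - ζ 4)⁻¹ •
        (B145 (B245 (B345
            (gw ζ a lam (-1) 0 1 3 4 * gw ζ a lam (-1) 1 2 3 4 * gw ζ a lam 1 0 2 3 4))) -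
          B145 (B245 (B345 (fw ζ a 0 1 3 4 * fw ζ a 1 2 3 4 * fw ζ a 0 2 3 4)))) ∈
      Submodule.span F (degMonomials a 5) := by
  have key2 : ∀ (f f' x y : Λ), (f + x) * (f' + y) - f * f' = f * y + x * f' + x * y := by
    intros; noncomm_ring
  have key3 : ∀ (f f' f'' x y z : Λ),
      (f + x) * (f' + y) * (f'' + z) - f * f' * f'' =
        f * f' * z + f * y * f'' + f * y * z + x * f' * f'' + x * f' * z + x * y * f''
          + x * y * z := by
    intros; noncomm_ring
  have hf1 : fw ζ a 0 1 2 3 ∈ Submodule.span F (degMonomials a 2) := by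
    simp only [fw, sub_eq_add_neg]
    refine add_mem (add_mem (add_mem (add_mem (add_mem ?_ ?_) ?_) ?_) ?_) ?_ <;>
      first
        | exact Submodule.smul_mem _ _ (my_mem2 a hanti hsq _ _ _ (by decide))
        | exact neg_mem (Submodule.smul_mem _ _ (my_mem2 a hanti hsq _ _ _ (by decide)))
  have hf2 : fw ζ a 0 1 2 4 ∈ Submodule.span F (degMonomials a 2) := by
    simp only [fw, sub_eq_add_neg]
    refine add_mem (add_mem (add_mem (add_mem (add_mem ?_ ?_) ?_) ?_) ?_) ?_ <;>
      first
        | exact Submodule.smul_mem _ _ (my_mem2 a hanti hsq _ _ _ (by decide))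
        | exact neg_mem (Submodule.smul_mem _ _ (my_mem2 a hanti hsq _ _ _ (by decide)))
  have hg1 : fw ζ a 0 1 3 4 ∈ Submodule.span F (degMonomials a 2) := by
    simp only [fw, sub_eq_add_neg]
    refine add_mem (add_mem (add_mem (add_mem (add_mem ?_ ?_) ?_) ?_) ?_) ?_ <;>
      first
        | exact Submodule.smul_mem _ _ (my_mem2 a hanti hsq _ _ _ (by decide))
        | exact neg_mem (Submodule.smul_mem _ _ (my_mem2 a hanti hsq _ _ _ (by decide)))
  have hg2 : fw ζ a 1 2 3 4 ∈ Submodule.span F (degMonomials a 2) := by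
    simp only [fw, sub_eq_add_neg]
    refine add_mem (add_mem (add_mem (add_mem (add_mem ?_ ?_) ?_) ?_) ?_) ?_ <;>
      first
        | exact Submodule.smul_mem _ _ (my_mem2 a hanti hsq _ _ _ (by decide))
        | exact neg_mem (Submodule.smul_mem _ _ (my_mem2 a hanti hsq _ _ _ (by decide)))
  have hg3 : fw ζ a 0 2 3 4 ∈ Submodule.span F (degMonomials a 2) := by
    simp only [fw, sub_eq_add_neg]
    refine add_mem (add_mem (add_mem (add_mem (add_mem ?_ ?_) ?_) ?_) ?_) ?_ <;>
      first
        | exact Submodule.smul_mem _ _ (my_mem2 a hanti hsq _ _ _ (by decide))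
        | exact neg_mem (Submodule.smul_mem _ _ (my_mem2 a hanti hsq _ _ _ (by decide)))
  have n1 : a {0, 1, 2} * a {0, 1, 3} * a {0, 2, 3} * a {1, 2, 3} ∈
      Submodule.span F (degMonomials a 4) := by
    simpa [mul_assoc] using my_mem4 a hanti hsq 4 _ _ _ _ (by decide)
  have n2 : a {0, 1, 2} * a {0, 1, 4} * a {0, 2, 4} * a {1, 2, 4} ∈
      Submodule.span F (degMonomials a 4) := by
    simpa [mul_assoc] using my_mem4 a hanti hsq 4 _ _ _ _ (by decide)
  constructor
  · have h1 : gw ζ a lam 1 0 1 2 3 * gw ζ a lam (-1) 0 1 2 4 -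
        fw ζ a 0 1 2 3 * fw ζ a 0 1 2 4 ∈ Submodule.span F (degMonomials a 6) := by
      simp only [gw]
      rw [key2]
      refine add_mem (add_mem ?_ ?_) ?_
      · exact my_mul_mem a hanti hsq 2 4 _ _ hf1 (Submodule.smul_mem _ _ n2)
      · exact my_mul_mem a hanti hsq 4 2 _ _ (Submodule.smul_mem _ _ n1) hf2
      · simp only [smul_mul_assoc, mul_smul_comm, smul_smul, mul_assoc]
        exact Submodule.smul_mem _ _ (my_mem8 a hanti hsq 6 _ _ _ _ _ _ _ _ (by decide))
    have h2 := my_berezin_span a hanti hsq _ B123 hB123 5 _ h1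
    rwa [map_sub] at h2
  · have h1 : gw ζ a lam (-1) 0 1 3 4 * gw ζ a lam (-1) 1 2 3 4 * gw ζ a lam 1 0 2 3 4 -
        fw ζ a 0 1 3 4 * fw ζ a 1 2 3 4 * fw ζ a 0 2 3 4 ∈
        Submodule.span F (degMonomials a 8) := by
      simp only [gw]
      rw [key3]
      have m1 : a {0, 1, 3} * a {0, 1, 4} * a {0, 3, 4} * a {1, 3, 4} ∈
          Submodule.span F (degMonomials a 4) := by
        simpa [mul_assoc] using my_mem4 a hanti hsq 4 _ _ _ _ (by decide)
      have m2 : a {1, 2, 3} * a {1, 2, 4} * a {1, 3, 4} * a {2, 3, 4} ∈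
          Submodule.span F (degMonomials a 4) := by
        simpa [mul_assoc] using my_mem4 a hanti hsq 4 _ _ _ _ (by decide)
      have m3 : a {0, 2, 3} * a {0, 2, 4} * a {0, 3, 4} * a {2, 3, 4} ∈
          Submodule.span F (degMonomials a 4) := by
        simpa [mul_assoc] using my_mem4 a hanti hsq 4 _ _ _ _ (by decide)
      refine add_mem (add_mem (add_mem (add_mem (add_mem (add_mem ?_ ?_) ?_) ?_) ?_) ?_) ?_
      · exact my_mul_mem a hanti hsq 4 4 _ _ (my_mul_mem a hanti hsq 2 2 _ _ hg1 hg2)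
          (Submodule.smul_mem _ _ m3)
      · exact my_mul_mem a hanti hsq 6 2 _ _ (my_mul_mem a hanti hsq 2 4 _ _ hg1
          (Submodule.smul_mem _ _ m2)) hg3
      · simp only [fw, sub_eq_add_neg, mul_add, add_mul, neg_mul, mul_neg, neg_neg,
          smul_mul_assoc, mul_smul_comm, smul_smul, mul_assoc]
        repeat
          first
          | apply add_mem
          | apply neg_mem
          | apply Submodule.smul_mem
          | exact my_mem10 a hanti hsq 8 _ _ _ _ _ _ _ _ _ _ (by decide)
      · exact my_mul_mem a hanti hsq 6 2 _ _ (my_mul_mem a hanti hsq 4 2 _ _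
          (Submodule.smul_mem _ _ m1) hg2) hg3
      · simp only [fw, sub_eq_add_neg, mul_add, add_mul, neg_mul, mul_neg, neg_neg,
          smul_mul_assoc, mul_smul_comm, smul_smul, mul_assoc]
        repeat
          first
          | apply add_mem
          | apply neg_mem
          | apply Submodule.smul_mem
          | exact my_mem10 a hanti hsq 8 _ _ _ _ _ _ _ _ _ _ (by decide)
      · simp only [fw, sub_eq_add_neg, mul_add, add_mul, neg_mul, mul_neg, neg_neg,
          smul_mul_assoc, mul_smul_comm, smul_smul, mul_assoc]
        repeat
          first
          | apply add_mem
          | apply neg_mem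
          | apply Submodule.smul_mem
          | exact my_mem10 a hanti hsq 8 _ _ _ _ _ _ _ _ _ _ (by decide)
      · simp only [smul_mul_assoc, mul_smul_comm, smul_smul, mul_assoc]
        exact Submodule.smul_mem _ _
          (my_mem12 a hanti hsq 8 _ _ _ _ _ _ _ _ _ _ _ _ (by decide))
    have h2 := my_berezin_span a hanti hsq _ B345 hB345 7 _ h1
    have h3 := my_berezin_span a hanti hsq _ B245 hB245 6 _ h2
    have h4 := my_berezin_span a hanti hsq _ B145 hB145 5 _ h3
    rw [map_sub, map_sub, map_sub] at h4
    exact Submodule.smul_mem _ _ h4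
end

section
/- Assume ζ_4 ≠ ζ_5 and let μ ∈ F. Then both differences ∫ h_{1234} h_{1235} da_{123} − ∫ f_{1234} f_{1235} da_{123} and (1/ζ_{45})·(∭ h_{1245} h_{2345} h_{1345} da_{345} da_{245} da_{145} − ∭ f_{1245} f_{2345} f_{1345} da_{345} da_{245} da_{145}) are linear combinations of Grassmann monomials of degree exactly 1 in the generators a_S; in particular, the degree-3 parts of the two sides of the pentagon equation for the h's coincide with those for the f's. -/
section Aux

variable {F : Type*} [Field F] {Λ : Type*} [Ring Λ] [Algebra F Λ]

lemma gen_mem_notInvolving (a : Finset (Fin 5) → Λ) {S i : Finset (Fin 5)} (h : S ≠ i) :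
    a S ∈ notInvolving F a i :=
  Algebra.subset_adjoin ⟨S, h, rfl⟩

lemma prod_mem_notInvolving (a : Finset (Fin 5) → Λ) {i : Finset (Fin 5)} :
    ∀ l : List (Finset (Fin 5)), i ∉ l → (l.map a).prod ∈ notInvolving F a i
  | [], _ => by simpa using one_mem _
  | S :: t, h => by
    simp only [List.map_cons, List.prod_cons]
    exact mul_mem (gen_mem_notInvolving a (by rintro rfl; exact h List.mem_cons_self))
      (prod_mem_notInvolving a t fun hm => h (List.mem_cons_of_mem _ hm))

lemma move_gen (a : Finset (Fin 5) → Λ) (hanti : ∀ S T, a S * a T = -(a T * a S))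
    (x : Finset (Fin 5)) :
    ∀ l : List (Finset (Fin 5)),
      a x * (l.map a).prod = ((-1 : F) ^ l.length) • ((l.map a).prod * a x)
  | [] => by simp
  | S :: t => by
    have ih := move_gen a hanti x t
    simp only [List.map_cons, List.prod_cons, List.length_cons]
    calc a x * (a S * (t.map a).prod) = (a x * a S) * (t.map a).prod := by rw [mul_assoc]
      _ = -(a S * (a x * (t.map a).prod)) := by rw [hanti, neg_mul, mul_assoc]
      _ = -(a S * (((-1 : F) ^ t.length) • ((t.map a).prod * a x))) := by rw [ih]
      _ = ((-1 : F) ^ (t.length + 1)) • (a S * (t.map a).prod * a x) := by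
          rw [mul_smul_comm, pow_succ]
          simp [mul_smul, mul_assoc]

lemma prod_eq_zero_of_dup (K : Type*) [Field K] [Algebra K Λ] (a : Finset (Fin 5) → Λ)
    (hanti : ∀ S T, a S * a T = -(a T * a S))
    (hsq : ∀ S, a S * a S = 0) :
    ∀ l : List (Finset (Fin 5)), ¬ l.Nodup → (l.map a).prod = 0
  | [], h => absurd List.nodup_nil h
  | x :: t, h => by
    simp only [List.map_cons, List.prod_cons]
    by_cases hx : x ∈ t
    · obtain ⟨s, u, rfl⟩ := List.append_of_mem hx
      simp only [List.map_append, List.prod_append, List.map_cons, List.prod_cons]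
      calc a x * ((s.map a).prod * (a x * (u.map a).prod))
          = (a x * (s.map a).prod) * (a x * (u.map a).prod) := by rw [mul_assoc]
        _ = (((-1 : K) ^ s.length) • ((s.map a).prod * a x)) * (a x * (u.map a).prod) := by
            rw [move_gen (F := K) a hanti]
        _ = ((-1 : K) ^ s.length) • ((s.map a).prod * ((a x * a x) * (u.map a).prod)) := by
            rw [smul_mul_assoc, mul_assoc, ← mul_assoc (a x) (a x)]
        _ = 0 := by rw [hsq]; simp
    · have ht : ¬ t.Nodup := fun hn => h (List.nodup_cons.2 ⟨hx, hn⟩)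
      rw [prod_eq_zero_of_dup K a hanti hsq t ht, mul_zero]

lemma listProd_mem_span (a : Finset (Fin 5) → Λ)
    (hanti : ∀ S T, a S * a T = -(a T * a S))
    (hsq : ∀ S, a S * a S = 0)
    (l : List (Finset (Fin 5))) (hc : ∀ S ∈ l, S.card = 3) :
    (l.map a).prod ∈ Submodule.span F (degMonomials a l.length) := by
  by_cases h : l.Nodup
  · exact Submodule.subset_span ⟨l, rfl, h, hc, rfl⟩
  · rw [prod_eq_zero_of_dup F a hanti hsq l h]; exact zero_mem _

lemma mul_mem_span_add (a : Finset (Fin 5) → Λ)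
    (hanti : ∀ S T, a S * a T = -(a T * a S))
    (hsq : ∀ S, a S * a S = 0) {d e : ℕ} {x y : Λ}
    (hx : x ∈ Submodule.span F (degMonomials a d))
    (hy : y ∈ Submodule.span F (degMonomials a e)) :
    x * y ∈ Submodule.span F (degMonomials a (d + e)) := by
  induction hx using Submodule.span_induction with
  | mem x hxm =>
    induction hy using Submodule.span_induction with
    | mem y hym =>
      obtain ⟨l₁, hl₁, _, hc₁, rfl⟩ := hxm
      obtain ⟨l₂, hl₂, _, hc₂, rfl⟩ := hym
      rw [← List.prod_append, ← List.map_append]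
      have := listProd_mem_span (F := F) a hanti hsq (l₁ ++ l₂) (by
        intro S hS
        rcases List.mem_append.1 hS with h | h
        · exact hc₁ S h
        · exact hc₂ S h)
      rwa [List.length_append, hl₁, hl₂] at this
    | zero => rw [mul_zero]; exact zero_mem _
    | add y z _ _ hy hz => rw [mul_add]; exact add_mem hy hz
    | smul c y _ hy => rw [mul_smul_comm]; exact Submodule.smul_mem _ _ hy
  | zero => rw [zero_mul]; exact zero_mem _
  | add x z _ _ hx hz => rw [add_mul]; exact add_mem hx hz
  | smul c x _ hx => rw [smul_mul_assoc]; exact Submodule.smul_mem _ _ hx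

lemma berezin_step (a : Finset (Fin 5) → Λ)
    (hanti : ∀ S T, a S * a T = -(a T * a S))
    {i : Finset (Fin 5)} {B : Λ →ₗ[F] Λ} (hB : IsBerezin F a i B) {d : ℕ} {x : Λ}
    (hx : x ∈ Submodule.span F (degMonomials a (d + 1))) :
    B x ∈ Submodule.span F (degMonomials a d) := by
  induction hx using Submodule.span_induction with
  | mem x hxm =>
    obtain ⟨l, hl, hnd, hc, rfl⟩ := hxm
    by_cases hi : i ∈ l
    · obtain ⟨s, t, rfl⟩ := List.append_of_mem hi
      obtain ⟨h1, h2, h3⟩ := List.nodup_append.1 hnd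
      have hnot : i ∉ s ++ t := by
        intro hmem
        rcases List.mem_append.1 hmem with hm | hm
        · exact h3 _ hm _ List.mem_cons_self rfl
        · exact (List.nodup_cons.1 h2).1 hm
      have hprod : ((s ++ i :: t).map a).prod
          = ((-1 : F) ^ t.length) • (((s ++ t).map a).prod * a i) := by
        simp only [List.map_append, List.prod_append, List.map_cons, List.prod_cons]
        rw [move_gen (F := F) a hanti, mul_smul_comm, ← mul_assoc]
      rw [hprod, map_smul, hB.2 _ (prod_mem_notInvolving a _ hnot)]
      refine Submodule.smul_mem _ _ (Submodule.subset_span ⟨s ++ t, ?_, ?_, ?_, rfl⟩)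
      · simp only [List.length_append, List.length_cons] at hl ⊢
        omega
      · exact hnd.sublist ((t.sublist_cons_self i).append_left s)
      · intro S hS
        rcases List.mem_append.1 hS with hm | hm
        · exact hc S (List.mem_append.2 (Or.inl hm))
        · exact hc S (List.mem_append.2 (Or.inr (List.mem_cons_of_mem _ hm)))
    · rw [hB.1 _ (prod_mem_notInvolving a l hi)]; exact zero_mem _
  | zero => rw [map_zero]; exact zero_mem _
  | add x y _ _ hx hy => rw [map_add]; exact add_mem hx hy
  | smul c x _ hx => rw [map_smul]; exact Submodule.smul_mem _ _ hx

lemma berezin_deg_zero {a : Finset (Fin 5) → Λ} {i : Finset (Fin 5)} {B : Λ →ₗ[F] Λ}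
    (hB : IsBerezin F a i B) {x : Λ}
    (hx : x ∈ Submodule.span F (degMonomials a 0)) : B x = 0 := by
  induction hx using Submodule.span_induction with
  | mem x hxm =>
    obtain ⟨l, hl, -, -, rfl⟩ := hxm
    rw [List.length_eq_zero_iff.1 hl]
    exact hB.1 _ (by simpa using one_mem _)
  | zero => exact map_zero B
  | add x y _ _ hx hy => rw [map_add, hx, hy, add_zero]
  | smul c x _ hx => rw [map_smul, hx, smul_zero]

lemma pair_mem_span (a : Finset (Fin 5) → Λ) {S T : Finset (Fin 5)} (hST : S ≠ T)
    (hS : S.card = 3) (hT : T.card = 3) :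
    a S * a T ∈ Submodule.span F (degMonomials a 2) :=
  Submodule.subset_span ⟨[S, T], rfl, by simp [hST],
    by intro U hU; rcases (by simpa using hU : U = S ∨ U = T) with rfl | rfl <;> assumption,
    by simp⟩

lemma fw_mem_span (a : Finset (Fin 5) → Λ) (ζ : Fin 5 → F) (i₁ i₂ i₃ i₄ : Fin 5)
    (h₁ : ({i₁, i₂, i₃} : Finset (Fin 5)).card = 3)
    (h₂ : ({i₁, i₂, i₄} : Finset (Fin 5)).card = 3)
    (h₃ : ({i₁, i₃, i₄} : Finset (Fin 5)).card = 3)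
    (h₄ : ({i₂, i₃, i₄} : Finset (Fin 5)).card = 3)
    (n₁₂ : ({i₁, i₂, i₃} : Finset (Fin 5)) ≠ {i₁, i₂, i₄})
    (n₁₃ : ({i₁, i₂, i₃} : Finset (Fin 5)) ≠ {i₁, i₃, i₄})
    (n₂₃ : ({i₁, i₂, i₄} : Finset (Fin 5)) ≠ {i₁, i₃, i₄})
    (n₁₄ : ({i₁, i₂, i₃} : Finset (Fin 5)) ≠ {i₂, i₃, i₄})
    (n₂₄ : ({i₁, i₂, i₄} : Finset (Fin 5)) ≠ {i₂, i₃, i₄})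
    (n₃₄ : ({i₁, i₃, i₄} : Finset (Fin 5)) ≠ {i₂, i₃, i₄}) :
    fw ζ a i₁ i₂ i₃ i₄ ∈ Submodule.span F (degMonomials a 2) := by
  unfold fw
  exact add_mem (sub_mem (add_mem (add_mem (sub_mem
    (Submodule.smul_mem _ _ (pair_mem_span a n₁₂ h₁ h₂))
    (Submodule.smul_mem _ _ (pair_mem_span a n₁₃ h₁ h₃)))
    (Submodule.smul_mem _ _ (pair_mem_span a n₂₃ h₂ h₃)))
    (Submodule.smul_mem _ _ (pair_mem_span a n₁₄ h₁ h₄)))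
    (Submodule.smul_mem _ _ (pair_mem_span a n₂₄ h₂ h₄)))
    (Submodule.smul_mem _ _ (pair_mem_span a n₃₄ h₃ h₄))

end Aux

/-- The differences between the two sides of the pentagon equation for the `h`'s and
for the `f`'s are linear combinations of Grassmann monomials of degree exactly 1;
in particular the degree-3 parts of the two sides for the `h`'s coincide with those
for the `f`'s. -/
theorem h_minus_f_degree_one
    {F : Type*} [Field F] {Λ : Type*} [Ring Λ] [Algebra F Λ]
    (hchar : (2 : F) ≠ 0)
    (ζ : Fin 5 → F)
    (h45 : ζ 3 ≠ ζ 4) (mu : F)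
    (a : Finset (Fin 5) → Λ)
    (hanti : ∀ S T, a S * a T = -(a T * a S))
    (hsq : ∀ S, a S * a S = 0)
    (B123 B145 B245 B345 : Λ →ₗ[F] Λ)
    (hB123 : IsBerezin F a ({0, 1, 2} : Finset (Fin 5)) B123)
    (hB145 : IsBerezin F a ({0, 3, 4} : Finset (Fin 5)) B145)
    (hB245 : IsBerezin F a ({1, 3, 4} : Finset (Fin 5)) B245)
    (hB345 : IsBerezin F a ({2, 3, 4} : Finset (Fin 5)) B345)
 :
    B123 (hw ζ a mu 1 0 1 2 3 * hw ζ a mu (-1) 0 1 2 4) -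
        B123 (fw ζ a 0 1 2 3 * fw ζ a 0 1 2 4) ∈
      Submodule.span F (degMonomials a 1) ∧
    (ζ 3 - ζ 4)⁻¹ •
        (B145 (B245 (B345
            (hw ζ a mu (-1) 0 1 3 4 * hw ζ a mu (-1) 1 2 3 4 * hw ζ a mu 1 0 2 3 4))) -
          B145 (B245 (B345 (fw ζ a 0 1 3 4 * fw ζ a 1 2 3 4 * fw ζ a 0 2 3 4)))) ∈
      Submodule.span F (degMonomials a 1) := by
  -- memberships of the tetrahedron weights in the degree-2 span
  have hf1234 : fw ζ a 0 1 2 3 ∈ Submodule.span F (degMonomials a 2) :=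
    fw_mem_span (F := F) a ζ 0 1 2 3 (by decide) (by decide) (by decide) (by decide)
      (by decide) (by decide) (by decide) (by decide) (by decide) (by decide)
  have hf1235 : fw ζ a 0 1 2 4 ∈ Submodule.span F (degMonomials a 2) :=
    fw_mem_span (F := F) a ζ 0 1 2 4 (by decide) (by decide) (by decide) (by decide)
      (by decide) (by decide) (by decide) (by decide) (by decide) (by decide)
  have hG1 : fw ζ a 0 1 3 4 ∈ Submodule.span F (degMonomials a 2) :=
    fw_mem_span (F := F) a ζ 0 1 3 4 (by decide) (by decide) (by decide) (by decide)
      (by decide) (by decide) (by decide) (by decide) (by decide) (by decide)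
  have hG2 : fw ζ a 1 2 3 4 ∈ Submodule.span F (degMonomials a 2) :=
    fw_mem_span (F := F) a ζ 1 2 3 4 (by decide) (by decide) (by decide) (by decide)
      (by decide) (by decide) (by decide) (by decide) (by decide) (by decide)
  have hG3 : fw ζ a 0 2 3 4 ∈ Submodule.span F (degMonomials a 2) :=
    fw_mem_span (F := F) a ζ 0 2 3 4 (by decide) (by decide) (by decide) (by decide)
      (by decide) (by decide) (by decide) (by decide) (by decide) (by decide)
  constructor
  · -- first part
    set F1 := fw ζ a 0 1 2 3 with hF1def
    set F2 := fw ζ a 0 1 2 4 with hF2def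
    have e1 : hw ζ a mu 1 0 1 2 3 * hw ζ a mu (-1) 0 1 2 4
        = F1 * F2 + mu • F2 - mu • F1 - (mu * mu) • (1 : Λ) := by
      simp only [hw, ← hF1def, ← hF2def]
      simp only [add_mul, mul_add, smul_mul_assoc, mul_smul_comm, mul_one, one_mul, smul_smul]
      match_scalars <;> ring
    have hB1 : B123 (1 : Λ) = 0 := hB123.1 1 (one_mem _)
    have key : B123 (hw ζ a mu 1 0 1 2 3 * hw ζ a mu (-1) 0 1 2 4) - B123 (F1 * F2)
        = mu • B123 F2 - mu • B123 F1 := by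
      rw [e1]
      simp only [map_sub, map_add, map_smul, hB1, smul_zero]
      abel
    rw [key]
    exact sub_mem (Submodule.smul_mem _ _ (berezin_step (d := 1) a hanti hB123 hf1235))
      (Submodule.smul_mem _ _ (berezin_step (d := 1) a hanti hB123 hf1234))
  · -- second part
    set G1 := fw ζ a 0 1 3 4 with hG1def
    set G2 := fw ζ a 1 2 3 4 with hG2def
    set G3 := fw ζ a 0 2 3 4 with hG3def
    have e2 : hw ζ a mu (-1) 0 1 3 4 * hw ζ a mu (-1) 1 2 3 4 * hw ζ a mu 1 0 2 3 4
        = G1 * (G2 * G3) + mu • (G1 * G2) - mu • (G1 * G3) - (mu * mu) • G1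
          - mu • (G2 * G3) - (mu * mu) • G2 + (mu * mu) • G3 + (mu * mu * mu) • (1 : Λ) := by
      simp only [hw, ← hG1def, ← hG2def, ← hG3def]
      simp only [add_mul, mul_add, smul_mul_assoc, mul_smul_comm, mul_one, one_mul, smul_smul,
        mul_assoc]
      match_scalars <;> ring
    -- vanishing pieces
    have z1 : B345 G1 = 0 := by
      apply hB345.1
      rw [hG1def]
      unfold fw
      exact add_mem (sub_mem (add_mem (add_mem (sub_mem
        (Subalgebra.smul_mem _ (mul_mem (gen_mem_notInvolving a (by decide))
          (gen_mem_notInvolving a (by decide))) _)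
        (Subalgebra.smul_mem _ (mul_mem (gen_mem_notInvolving a (by decide))
          (gen_mem_notInvolving a (by decide))) _))
        (Subalgebra.smul_mem _ (mul_mem (gen_mem_notInvolving a (by decide))
          (gen_mem_notInvolving a (by decide))) _))
        (Subalgebra.smul_mem _ (mul_mem (gen_mem_notInvolving a (by decide))
          (gen_mem_notInvolving a (by decide))) _))
        (Subalgebra.smul_mem _ (mul_mem (gen_mem_notInvolving a (by decide))
          (gen_mem_notInvolving a (by decide))) _))
        (Subalgebra.smul_mem _ (mul_mem (gen_mem_notInvolving a (by decide))
          (gen_mem_notInvolving a (by decide))) _)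
    have z0 : B345 (1 : Λ) = 0 := hB345.1 1 (one_mem _)
    have z2 : B145 (B245 (B345 G2)) = 0 :=
      berezin_deg_zero hB145
        (berezin_step (d := 0) a hanti hB245 (berezin_step (d := 1) a hanti hB345 hG2))
    have z3 : B145 (B245 (B345 G3)) = 0 :=
      berezin_deg_zero hB145
        (berezin_step (d := 0) a hanti hB245 (berezin_step (d := 1) a hanti hB345 hG3))
    have p12 : G1 * G2 ∈ Submodule.span F (degMonomials a 4) :=
      mul_mem_span_add (d := 2) (e := 2) a hanti hsq hG1 hG2
    have p13 : G1 * G3 ∈ Submodule.span F (degMonomials a 4) :=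
      mul_mem_span_add (d := 2) (e := 2) a hanti hsq hG1 hG3
    have p23 : G2 * G3 ∈ Submodule.span F (degMonomials a 4) :=
      mul_mem_span_add (d := 2) (e := 2) a hanti hsq hG2 hG3
    have m12 : B145 (B245 (B345 (G1 * G2))) ∈ Submodule.span F (degMonomials a 1) :=
      berezin_step (d := 1) a hanti hB145 (berezin_step (d := 2) a hanti hB245
        (berezin_step (d := 3) a hanti hB345 p12))
    have m13 : B145 (B245 (B345 (G1 * G3))) ∈ Submodule.span F (degMonomials a 1) :=
      berezin_step (d := 1) a hanti hB145 (berezin_step (d := 2) a hanti hB245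
        (berezin_step (d := 3) a hanti hB345 p13))
    have m23 : B145 (B245 (B345 (G2 * G3))) ∈ Submodule.span F (degMonomials a 1) :=
      berezin_step (d := 1) a hanti hB145 (berezin_step (d := 2) a hanti hB245
        (berezin_step (d := 3) a hanti hB345 p23))
    have key : B145 (B245 (B345
          (hw ζ a mu (-1) 0 1 3 4 * hw ζ a mu (-1) 1 2 3 4 * hw ζ a mu 1 0 2 3 4)))
          - B145 (B245 (B345 (G1 * G2 * G3)))
        = mu • B145 (B245 (B345 (G1 * G2))) - mu • B145 (B245 (B345 (G1 * G3)))
          - mu • B145 (B245 (B345 (G2 * G3))) := by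
      rw [e2, mul_assoc G1 G2 G3]
      simp only [map_add, map_sub, map_smul, z1, z0, map_zero, smul_zero, z2, z3]
      abel
    rw [key]
    exact Submodule.smul_mem _ _ (sub_mem (sub_mem (Submodule.smul_mem _ _ m12)
      (Submodule.smul_mem _ _ m13)) (Submodule.smul_mem _ _ m23))
end
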